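/- arXiv:1901.01796 — 2 statements merged into one kernel-verified Lean document; each statement's English description precedes it below -/
import Mathlib

section
/- For every integer e ≥ 2, setting d = 4e + 3, there exist a nonzero ternary form T ∈ S^d ℂ³ and finite sets A, B ⊆ ℙ²(ℂ) such that A is a non-redundant set computing T with ℓ(A) = binom(2e+3,2) + e + 2 and B is a non-redundant set computing T with ℓ(B) = binom(2e+3,2) + e. (In particular the bound r ≤ binom(m+2,2) + ⌈m/2⌉ in the rank criterion for odd-degree ternary forms is sharp when d ≡ 3 mod 4.) -/
open MvPolynomial

noncomputable section

/-- Projective n-space over ℂ, viewed as classes of linear forms (vectors in ℂ^{n+1}). -/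
abbrev Proj (n : ℕ) := Projectivization ℂ (Fin (n + 1) → ℂ)

instance (n : ℕ) : DecidableEq (Proj n) := Classical.decEq _

/-- The linear form with coefficient vector `v`. -/
def linForm (n : ℕ) (v : Fin (n + 1) → ℂ) : MvPolynomial (Fin (n + 1)) ℂ :=
  ∑ i, MvPolynomial.C (v i) * MvPolynomial.X i

/-- The `d`-th Veronese image of a projective point: the `d`-th power of (a representative of)
the corresponding linear form. -/
def vero (n d : ℕ) (P : Proj n) : MvPolynomial (Fin (n + 1)) ℂ :=
  linForm n P.rep ^ d

/-- `A` computes `T` : the class of `T` lies in the projective linear span of `v_d(A)`,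
equivalently `T` lies in the linear span of the `d`-th powers of the points of `A`. -/
def Computes (n d : ℕ) (A : Finset (Proj n)) (T : MvPolynomial (Fin (n + 1)) ℂ) : Prop :=
  T ∈ Submodule.span ℂ (vero n d '' (A : Set (Proj n)))

/-- `A` is a non-redundant set computing `T`. -/
def NRComputes (n d : ℕ) (A : Finset (Proj n)) (T : MvPolynomial (Fin (n + 1)) ℂ) : Prop :=
  Computes n d A T ∧ ∀ A' ⊂ A, ¬ Computes n d A' T

/-- The (Waring) rank of `T` : minimal cardinality of a finite set computing `T`. -/
def waringRank (n d : ℕ) (T : MvPolynomial (Fin (n + 1)) ℂ) : ℕ :=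
  sInf {r | ∃ A : Finset (Proj n), A.card = r ∧ Computes n d A T}

/-- `T` is identifiable: there is exactly one finite set computing `T` whose
cardinality equals the rank of `T`. -/
def Identifiable (n d : ℕ) (T : MvPolynomial (Fin (n + 1)) ℂ) : Prop :=
  ∃! A : Finset (Proj n), A.card = waringRank n d T ∧ Computes n d A T

/-- The evaluation map of degree `j` on the chosen homogeneous coordinates of `Z`. -/
def evalMap (n j : ℕ) (Z : Finset (Proj n)) :
    MvPolynomial.homogeneousSubmodule (Fin (n + 1)) ℂ j →ₗ[ℂ] (Z → ℂ) where
  toFun F := fun P => MvPolynomial.eval (P.1).rep F.1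
  map_add' F G := by funext P; simp
  map_smul' c F := by funext P; simp

/-- The Hilbert function of the finite set `Z` (at a natural number `j`). -/
def hilbN (n : ℕ) (Z : Finset (Proj n)) (j : ℕ) : ℕ :=
  Module.finrank ℂ (LinearMap.range (evalMap n j Z))

/-- The Hilbert function of the finite set `Z` (zero in negative degrees). -/
def hilb (n : ℕ) (Z : Finset (Proj n)) (j : ℤ) : ℕ :=
  if j < 0 then 0 else hilbN n Z j.toNat

/-- The first difference of the Hilbert function. -/
def Dhilb (n : ℕ) (Z : Finset (Proj n)) (j : ℤ) : ℤ :=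
  (hilb n Z j : ℤ) - (hilb n Z (j - 1) : ℤ)

/-- The `d`-th Kruskal rank of `A` : the largest `k` such that every subset of `A`
with at most `k` elements has linearly independent image under `v_d`. -/
def kruskalRank (n d : ℕ) (A : Finset (Proj n)) : ℕ :=
  sSup {k | k ≤ A.card ∧
    ∀ A' ⊆ A, A'.card ≤ k → LinearIndependent ℂ (fun P : A' => vero n d P.1)}

/-- The Cayley–Bacharach property in degree `d` for the finite set `Z`. -/
def CB (n d : ℕ) (Z : Finset (Proj n)) : Prop :=
  ∀ P ∈ Z, ∀ F : MvPolynomial (Fin (n + 1)) ℂ, F.IsHomogeneous d →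
    (∀ Q ∈ Z, Q ≠ P → MvPolynomial.eval Q.rep F = 0) → MvPolynomial.eval P.rep F = 0

end


section Aux1
open Finset Polynomial

lemma leadingCoeff_lagrange_basis {ι : Type*} [DecidableEq ι] {s : Finset ι} {v : ι → ℂ}
    (hvs : Set.InjOn v s) {i : ι} (hi : i ∈ s) :
    (Lagrange.basis s v i).coeff (s.card - 1) = Lagrange.nodalWeight s v i := by
  have h := Lagrange.natDegree_basis hvs hi
  rw [← h, Polynomial.coeff_natDegree, Lagrange.basis, leadingCoeff_prod,
    Lagrange.nodalWeight]
  refine Finset.prod_congr rfl fun j hj => ?_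
  have hne : v i ≠ v j := by
    rcases Finset.mem_erase.mp hj with ⟨hij, hjs⟩
    exact fun hh => hij (hvs hjs hi hh.symm)
  rw [Lagrange.basisDivisor, leadingCoeff_mul, leadingCoeff_C, leadingCoeff_X_sub_C, mul_one]

lemma nodalWeight_sum_pow {ι : Type*} [DecidableEq ι] {s : Finset ι} {v : ι → ℂ}
    (hvs : Set.InjOn v s) {m : ℕ} (hm : m + 2 ≤ s.card) :
    ∑ i ∈ s, Lagrange.nodalWeight s v i * (v i) ^ m = 0 := by
  have hdeg : (Polynomial.X ^ m : ℂ[X]).degree < s.card := by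
    rw [degree_X_pow]
    exact_mod_cast by omega
  have h := Lagrange.eq_interpolate hvs hdeg
  have h2 := congrArg (fun p => Polynomial.coeff p (s.card - 1)) h
  simp only [Lagrange.interpolate_apply] at h2
  rw [Polynomial.coeff_X_pow] at h2
  have : (if s.card - 1 = m then (1:ℂ) else 0) = 0 := by
    rw [if_neg]; omega
  rw [this] at h2
  rw [Polynomial.finset_sum_coeff] at h2
  symm
  rw [h2]
  refine Finset.sum_congr rfl fun i hi => ?_
  rw [Polynomial.coeff_C_mul, leadingCoeff_lagrange_basis hvs hi, Polynomial.eval_pow, Polynomial.eval_X, mul_comm]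

end Aux1

noncomputable section Aux2
open Finset MvPolynomial

lemma dep_sum {n D : ℕ} (hD : D + 2 ≤ n) (f : Fin n → ℂ) (hf : Function.Injective f)
    (P Q : MvPolynomial (Fin 3) ℂ) :
    ∑ j, Lagrange.nodalWeight Finset.univ f j • (P + MvPolynomial.C (f j) * Q) ^ D = 0 := by
  have expand : ∀ j : Fin n, (P + MvPolynomial.C (f j) * Q) ^ D =
      ∑ k ∈ range (D + 1), (f j) ^ (D - k) •
        (P ^ k * Q ^ (D - k) * (D.choose k : MvPolynomial (Fin 3) ℂ)) := by
    intro j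
    rw [add_pow]
    refine Finset.sum_congr rfl fun k hk => ?_
    rw [mul_pow, ← MvPolynomial.C_pow, MvPolynomial.smul_eq_C_mul]
    ring
  calc ∑ j, Lagrange.nodalWeight Finset.univ f j • (P + MvPolynomial.C (f j) * Q) ^ D
      = ∑ k ∈ range (D + 1), (∑ j, Lagrange.nodalWeight Finset.univ f j * (f j) ^ (D - k)) •
          (P ^ k * Q ^ (D - k) * (D.choose k : MvPolynomial (Fin 3) ℂ)) := by
        simp_rw [expand, Finset.smul_sum, smul_smul]
        rw [Finset.sum_comm]
        simp_rw [Finset.sum_smul]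
    _ = 0 := by
        refine Finset.sum_eq_zero fun k hk => ?_
        rw [nodalWeight_sum_pow (hf.injOn) (by simp; omega), zero_smul]

/-- directional derivative -/
def dirD (w : Fin 3 → ℂ) : MvPolynomial (Fin 3) ℂ →ₗ[ℂ] MvPolynomial (Fin 3) ℂ :=
  ∑ i, w i • ((MvPolynomial.pderiv i : Derivation ℂ (MvPolynomial (Fin 3) ℂ) (MvPolynomial (Fin 3) ℂ))).toLinearMap

def dotp (w v : Fin 3 → ℂ) : ℂ := ∑ i, w i * v i

lemma linForm_smul (c : ℂ) (v : Fin 3 → ℂ) : linForm 2 (c • v) = c • linForm 2 v := by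
  unfold linForm
  rw [Finset.smul_sum]
  refine Finset.sum_congr rfl fun i _ => ?_
  simp [MvPolynomial.smul_eq_C_mul, mul_assoc]

lemma pderiv_linForm (i : Fin 3) (v : Fin 3 → ℂ) :
    MvPolynomial.pderiv i (linForm 2 v) = MvPolynomial.C (v i) := by
  unfold linForm
  rw [map_sum]
  rw [Finset.sum_eq_single i]
  · simp
  · intro j _ hj
    rw [MvPolynomial.pderiv_C_mul, MvPolynomial.pderiv_X_of_ne hj, mul_zero]
  · simp

lemma dirD_linForm_pow (w v : Fin 3 → ℂ) (n : ℕ) :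
    dirD w (linForm 2 v ^ (n + 1)) = (((n:ℂ) + 1) * dotp w v) • linForm 2 v ^ n := by
  unfold dirD dotp
  rw [LinearMap.sum_apply]
  have : ∀ i : Fin 3, (w i • ((MvPolynomial.pderiv i : Derivation ℂ (MvPolynomial (Fin 3) ℂ) (MvPolynomial (Fin 3) ℂ))).toLinearMap)
      (linForm 2 v ^ (n+1)) = (w i * v i * ((n:ℂ)+1)) • linForm 2 v ^ n := by
    intro i
    rw [LinearMap.smul_apply]
    show w i • (MvPolynomial.pderiv i) (linForm 2 v ^ (n+1)) = _
    rw [MvPolynomial.pderiv_pow, pderiv_linForm]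
    push_cast
    simp only [Nat.add_sub_cancel, MvPolynomial.smul_eq_C_mul, map_mul, map_add, map_one,
      map_natCast]
    ring
  rw [Finset.sum_congr rfl fun i _ => this i, ← Finset.sum_smul, ← Finset.sum_mul, mul_comm]

def Phi : List (Fin 3 → ℂ) → (MvPolynomial (Fin 3) ℂ →ₗ[ℂ] ℂ)
  | [] => (MvPolynomial.aeval (fun _ => (0:ℂ)) : MvPolynomial (Fin 3) ℂ →ₐ[ℂ] ℂ).toLinearMap
  | w :: L => (Phi L).comp (dirD w)

lemma Phi_linForm_pow (L : List (Fin 3 → ℂ)) (v : Fin 3 → ℂ) :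
    Phi L (linForm 2 v ^ L.length) =
      (L.length.factorial : ℂ) * (L.map (fun w => dotp w v)).prod := by
  induction L with
  | nil => simp [Phi]
  | cons w L ih =>
      show Phi L (dirD w (linForm 2 v ^ (L.length + 1))) = _
      rw [dirD_linForm_pow, map_smul, ih]
      simp [Nat.factorial_succ]
      ring

lemma vero_eq_smul (d : ℕ) (v : Fin 3 → ℂ) (hv : v ≠ 0) :
    ∃ c : ℂ, c ≠ 0 ∧ vero 2 d (Projectivization.mk ℂ v hv) = c • (linForm 2 v ^ d) := by
  set P := Projectivization.mk ℂ v hv with hP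
  have h1 : Projectivization.mk ℂ P.rep P.rep_nonzero = Projectivization.mk ℂ v hv := by
    rw [Projectivization.mk_rep]
  rw [Projectivization.mk_eq_mk_iff] at h1
  obtain ⟨a, ha⟩ := h1
  refine ⟨(a : ℂ) ^ d, pow_ne_zero _ a.ne_zero, ?_⟩
  unfold vero
  rw [← ha, Units.smul_def, linForm_smul, smul_pow]

/-- Generic non-redundancy lemma. -/
lemma nr_general {ι : Type*} [DecidableEq ι] (d : ℕ) (S : Finset ι) (v : ι → (Fin 3 → ℂ))
    (hv : ∀ i, v i ≠ 0)
    (hinj : ∀ i ∈ S, ∀ j ∈ S,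
      Projectivization.mk ℂ (v i) (hv i) = Projectivization.mk ℂ (v j) (hv j) → i = j)
    (a : ι → ℂ) (ha : ∀ i ∈ S, a i ≠ 0)
    (hsep : ∀ i ∈ S, ∃ φ : MvPolynomial (Fin 3) ℂ →ₗ[ℂ] ℂ,
       (∀ j ∈ S, j ≠ i → φ (linForm 2 (v j) ^ d) = 0) ∧ φ (linForm 2 (v i) ^ d) ≠ 0) :
    NRComputes 2 d (S.image (fun i => Projectivization.mk ℂ (v i) (hv i)))
      (∑ i ∈ S, a i • linForm 2 (v i) ^ d) ∧
    (S.image (fun i => Projectivization.mk ℂ (v i) (hv i))).card = S.card := by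
  set pt := fun i => Projectivization.mk ℂ (v i) (hv i) with hpt
  set A := S.image pt with hA
  set T := ∑ i ∈ S, a i • linForm 2 (v i) ^ d with hT
  -- choose scalars
  have hc : ∀ i, ∃ c : ℂ, c ≠ 0 ∧ vero 2 d (pt i) = c • (linForm 2 (v i) ^ d) :=
    fun i => vero_eq_smul d (v i) (hv i)
  choose c hc0 hcv using hc
  have hpow : ∀ i, (linForm 2 (v i) ^ d) = (c i)⁻¹ • vero 2 d (pt i) := by
    intro i
    rw [hcv i, smul_smul, inv_mul_cancel₀ (hc0 i), one_smul]
  constructor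
  · constructor
    · -- Computes
      unfold Computes
      refine Submodule.sum_mem _ fun i hi => ?_
      rw [hpow i, smul_smul]
      refine Submodule.smul_mem _ _ (Submodule.subset_span ?_)
      exact ⟨pt i, Finset.mem_coe.mpr (Finset.mem_image_of_mem _ hi), rfl⟩
    · -- non-redundancy
      intro A' hA' hcomp
      obtain ⟨x, hxA, hxA'⟩ := Finset.exists_of_ssubset hA'
      obtain ⟨i, hiS, hix⟩ := Finset.mem_image.mp hxA
      obtain ⟨φ, hφ0, hφ1⟩ := hsep i hiS
      have hker : Submodule.span ℂ (vero 2 d '' (A' : Set (Proj 2))) ≤ LinearMap.ker φ := by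
        rw [Submodule.span_le]
        rintro _ ⟨z, hz, rfl⟩
        obtain ⟨j, hjS, hjz⟩ := Finset.mem_image.mp (hA'.subset (by exact_mod_cast hz))
        have hji : j ≠ i := fun h => hxA' (by
          rw [← hix, ← h, hjz]; exact_mod_cast hz)
        simp only [SetLike.mem_coe, LinearMap.mem_ker]
        rw [← hjz, hcv j, map_smul, hφ0 j hjS hji, smul_zero]
      have hT0 : φ T = 0 := hker (hcomp)
      rw [hT, map_sum] at hT0
      have : ∀ j ∈ S, j ≠ i → φ (a j • linForm 2 (v j) ^ d) = 0 := by
        intro j hj hji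
        rw [map_smul, hφ0 j hj hji, smul_eq_mul, mul_zero]
      rw [Finset.sum_eq_single_of_mem i hiS (fun j hj hji => this j hj hji)] at hT0
      rw [map_smul, smul_eq_mul] at hT0
      exact (mul_ne_zero (ha i hiS) hφ1) hT0
  · exact Finset.card_image_of_injOn fun i hi j hj h => hinj i hi j hj h

abbrev Iot (e : ℕ) := (Fin (2*e) × Fin (e+1)) ⊕ (Fin (4*e+5) ⊕ Fin (4*e+5))

def bb {n : ℕ} (j : Fin n) : ℂ := ((j : ℕ) : ℂ) + 1

lemma bb_inj {n : ℕ} : Function.Injective (bb (n := n)) := by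
  intro i j h
  unfold bb at h
  exact Fin.ext (Nat.cast_injective (add_right_cancel h : ((i:ℕ):ℂ) = ((j:ℕ):ℂ)))

lemma bb_ne_zero {n : ℕ} (j : Fin n) : bb j ≠ 0 := by
  unfold bb
  have : (((j : ℕ) + 1 : ℕ) : ℂ) ≠ 0 := Nat.cast_ne_zero.mpr (Nat.succ_ne_zero _)
  push_cast at this
  exact this

def vv (e : ℕ) : Iot e → (Fin 3 → ℂ)
  | .inl p => ![bb p.2, bb p.1, 1]
  | .inr (.inl j) => ![1, bb j, 0]
  | .inr (.inr j) => ![1, 0, bb j]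

lemma vv_ne_zero (e : ℕ) : ∀ i : Iot e, vv e i ≠ 0 := by
  rintro (p | j | j) h
  · exact (one_ne_zero : (1:ℂ) ≠ 0) (by simpa [vv] using congrFun h 2)
  · exact (one_ne_zero : (1:ℂ) ≠ 0) (by simpa [vv] using congrFun h 0)
  · exact (one_ne_zero : (1:ℂ) ≠ 0) (by simpa [vv] using congrFun h 0)

lemma vv_inj (e : ℕ) : ∀ i j : Iot e,
    Projectivization.mk ℂ (vv e i) (vv_ne_zero e i) = Projectivization.mk ℂ (vv e j) (vv_ne_zero e j) →
    i = j := by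
  intro i j h
  rw [Projectivization.mk_eq_mk_iff] at h
  obtain ⟨a, ha⟩ := h
  have h0 := congrFun ha 0
  have h1 := congrFun ha 1
  have h2 := congrFun ha 2
  rcases i with (p | jq | jr) <;> rcases j with (q | kq | kr) <;>
    simp only [vv, Pi.smul_apply, Units.smul_def, smul_eq_mul, Matrix.cons_val_zero,
      Matrix.cons_val_one, Matrix.head_cons, Matrix.cons_val_two, Matrix.tail_cons,
      mul_one, mul_zero] at h0 h1 h2
  · -- C vs C
    rw [h2, one_mul] at h0 h1
    exact congrArg Sum.inl (Prod.ext (bb_inj h1) (bb_inj h0)).symm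
  · -- C vs Q : h2 : 0 = 1
    exact absurd h2.symm one_ne_zero
  · -- C vs R : h1 : 0 = bb p.1
    exact absurd h1.symm (bb_ne_zero p.1)
  · -- Q vs C : h2 : a*1 = 0
    exact absurd h2 a.ne_zero
  · -- Q vs Q
    rw [h0, one_mul] at h1
    exact congrArg (Sum.inr ∘ Sum.inl) (bb_inj h1).symm
  · -- Q vs R : h1 : 0 = bb jq
    exact absurd h1.symm (bb_ne_zero jq)
  · -- R vs C : h1 : a * bb q.1 = 0
    exact absurd h1 (mul_ne_zero a.ne_zero (bb_ne_zero q.1))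
  · -- R vs Q : h2 : 0 = bb jr
    exact absurd h2.symm (bb_ne_zero jr)
  · -- R vs R
    rw [h0, one_mul] at h2
    exact congrArg (Sum.inr ∘ Sum.inr) (bb_inj h2).symm

def zv : Fin 3 → ℂ := ![0,0,1]
def yv : Fin 3 → ℂ := ![0,1,0]
def xv : Fin 3 → ℂ := ![1,0,0]
def rowv {n : ℕ} (i : Fin n) : Fin 3 → ℂ := ![0, 1, -(bb i)]
def colv {n : ℕ} (j : Fin n) : Fin 3 → ℂ := ![1, 0, -(bb j)]
def qkv {n : ℕ} (j : Fin n) : Fin 3 → ℂ := ![-(bb j), 1, 0]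
def rkv {n : ℕ} (j : Fin n) : Fin 3 → ℂ := ![-(bb j), 0, 1]

lemma phi_zero_of_mem {D : ℕ} {L : List (Fin 3 → ℂ)} {u : Fin 3 → ℂ} (w : Fin 3 → ℂ)
    (hw : w ∈ L) (h0 : dotp w u = 0) (hlen : L.length = D) :
    Phi L (linForm 2 u ^ D) = 0 := by
  subst hlen
  rw [Phi_linForm_pow, List.prod_eq_zero (List.mem_map.mpr ⟨w, hw, h0⟩), mul_zero]

lemma phi_ne_zero {D : ℕ} {L : List (Fin 3 → ℂ)} {u : Fin 3 → ℂ}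
    (h : ∀ w ∈ L, dotp w u ≠ 0) (hlen : L.length = D) :
    Phi L (linForm 2 u ^ D) ≠ 0 := by
  subst hlen
  rw [Phi_linForm_pow]
  refine mul_ne_zero (Nat.cast_ne_zero.mpr (Nat.factorial_ne_zero _)) (List.prod_ne_zero ?_)
  intro hm
  obtain ⟨w, hw, h0⟩ := List.mem_map.mp hm
  exact h w hw h0

def Sgen (e : ℕ) (CS : Finset (Fin (2*e) × Fin (e+1))) (QS RS : Finset (Fin (4*e+5))) :
    Finset (Iot e) :=
  (CS.image Sum.inl) ∪ (QS.image (Sum.inr ∘ Sum.inl)) ∪ (RS.image (Sum.inr ∘ Sum.inr))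

lemma mem_Sgen {e : ℕ} {CS : Finset (Fin (2*e) × Fin (e+1))} {QS RS : Finset (Fin (4*e+5))}
    {x : Iot e} : x ∈ Sgen e CS QS RS ↔
      (∃ p ∈ CS, Sum.inl p = x) ∨ (∃ j ∈ QS, Sum.inr (Sum.inl j) = x) ∨
      (∃ j ∈ RS, Sum.inr (Sum.inr j) = x) := by
  simp [Sgen, Finset.mem_union, Finset.mem_image, or_assoc, Function.comp]

lemma sep (e : ℕ) (he : 2 ≤ e) (CS : Finset (Fin (2*e) × Fin (e+1)))
    (QS RS : Finset (Fin (4*e+5))) (hQ : QS.card ≤ 2*e+3) (hR : RS.card ≤ 2*e+3) :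
    ∀ p ∈ Sgen e CS QS RS, ∃ φ : MvPolynomial (Fin 3) ℂ →ₗ[ℂ] ℂ,
      (∀ q ∈ Sgen e CS QS RS, q ≠ p → φ (linForm 2 (vv e q) ^ (4*e+3)) = 0) ∧
      φ (linForm 2 (vv e p) ^ (4*e+3)) ≠ 0 := by
  intro p hp
  rcases mem_Sgen.mp hp with ⟨c, hc, rfl⟩ | ⟨j₀, hj₀, rfl⟩ | ⟨j₀, hj₀, rfl⟩
  · -- p is a grid point c = (i₀, j₀)
    obtain ⟨i₀, j₀⟩ := c
    set L : List (Fin 3 → ℂ) :=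
      zv :: yv :: ((((univ.erase i₀).toList.map rowv) ++ ((univ.erase j₀).toList.map colv))
        ++ List.replicate (e+2) xv) with hL
    have hlen : L.length = 4*e+3 := by
      simp [hL, Finset.length_toList, Finset.card_erase_of_mem]
      omega
    refine ⟨Phi L, ?_, ?_⟩
    · intro q hq hne
      rcases mem_Sgen.mp hq with ⟨⟨i, j⟩, hcq, rfl⟩ | ⟨k, hk, rfl⟩ | ⟨k, hk, rfl⟩
      · -- another grid point
        by_cases hi : i = i₀
        · subst hi
          have hj : j ≠ j₀ := fun h => hne (by rw [h])
          refine phi_zero_of_mem (colv j) ?_ ?_ hlen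
          · exact List.mem_cons_of_mem _ (List.mem_cons_of_mem _ (List.mem_append_left _
              (List.mem_append_right _ (List.mem_map_of_mem (Finset.mem_toList.mpr
                (Finset.mem_erase.mpr ⟨hj, Finset.mem_univ _⟩))))))
          · simp only [dotp, Fin.sum_univ_three, vv, zv, yv, xv, rowv, colv, qkv, rkv, Matrix.cons_val_zero, Matrix.cons_val_one, Matrix.head_cons, Matrix.cons_val_two, Matrix.tail_cons]; ring
        · refine phi_zero_of_mem (rowv i) ?_ ?_ hlen
          · exact List.mem_cons_of_mem _ (List.mem_cons_of_mem _ (List.mem_append_left _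
              (List.mem_append_left _ (List.mem_map_of_mem (Finset.mem_toList.mpr
                (Finset.mem_erase.mpr ⟨hi, Finset.mem_univ _⟩))))))
          · simp only [dotp, Fin.sum_univ_three, vv, zv, yv, xv, rowv, colv, qkv, rkv, Matrix.cons_val_zero, Matrix.cons_val_one, Matrix.head_cons, Matrix.cons_val_two, Matrix.tail_cons]; ring
      · refine phi_zero_of_mem zv (List.mem_cons_self) ?_ hlen
        simp [dotp, Fin.sum_univ_three, vv, zv]
      · refine phi_zero_of_mem yv (List.mem_cons_of_mem _ (List.mem_cons_self)) ?_ hlen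
        simp [dotp, Fin.sum_univ_three, vv, yv]
    · refine phi_ne_zero (fun w hw => ?_) hlen
      simp only [hL, List.mem_cons, List.mem_append, List.mem_map, Finset.mem_toList,
        List.mem_replicate] at hw
      rcases hw with rfl | rfl | ((⟨i, hi, rfl⟩ | ⟨j, hj, rfl⟩) | ⟨-, rfl⟩)
      · simp [dotp, Fin.sum_univ_three, vv, zv]
      · simp [dotp, Fin.sum_univ_three, vv, yv]
        exact bb_ne_zero i₀
      · simp only [dotp, Fin.sum_univ_three, vv, rowv, Matrix.cons_val_zero,
          Matrix.cons_val_one, Matrix.head_cons, Matrix.cons_val_two, Matrix.tail_cons]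
        have : bb i₀ - bb i ≠ 0 := sub_ne_zero.mpr
          (fun h => (Finset.mem_erase.mp hi).1 (bb_inj h).symm)
        intro hcon
        apply this
        rw [← hcon]; ring
      · simp only [dotp, Fin.sum_univ_three, vv, colv, Matrix.cons_val_zero,
          Matrix.cons_val_one, Matrix.head_cons, Matrix.cons_val_two, Matrix.tail_cons]
        have : bb j₀ - bb j ≠ 0 := sub_ne_zero.mpr
          (fun h => (Finset.mem_erase.mp hj).1 (bb_inj h).symm)
        intro hcon
        apply this
        rw [← hcon]; ring
      · simp [dotp, Fin.sum_univ_three, vv, xv]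
        exact bb_ne_zero j₀
  · -- p is a Q point j₀ ∈ QS
    set L : List (Fin 3 → ℂ) :=
      yv :: (((univ.toList.map (rowv (n := 2*e))) ++ ((QS.erase j₀).toList.map qkv))
        ++ List.replicate (2*e+3 - QS.card) xv) with hL
    have hcard : 1 ≤ QS.card := Finset.card_pos.mpr ⟨j₀, hj₀⟩
    have hlen : L.length = 4*e+3 := by
      simp [hL, Finset.length_toList, Finset.card_erase_of_mem hj₀]
      omega
    refine ⟨Phi L, ?_, ?_⟩
    · intro q hq hne
      rcases mem_Sgen.mp hq with ⟨⟨i, j⟩, hcq, rfl⟩ | ⟨k, hk, rfl⟩ | ⟨k, hk, rfl⟩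
      · refine phi_zero_of_mem (rowv i) ?_ ?_ hlen
        · exact List.mem_cons_of_mem _ (List.mem_append_left _ (List.mem_append_left _
            (List.mem_map_of_mem (Finset.mem_toList.mpr (Finset.mem_univ _)))))
        · simp only [dotp, Fin.sum_univ_three, vv, zv, yv, xv, rowv, colv, qkv, rkv, Matrix.cons_val_zero, Matrix.cons_val_one, Matrix.head_cons, Matrix.cons_val_two, Matrix.tail_cons]; ring
      · have hkj : k ≠ j₀ := fun h => hne (by rw [h])
        refine phi_zero_of_mem (qkv k) ?_ ?_ hlen
        · exact List.mem_cons_of_mem _ (List.mem_append_left _ (List.mem_append_right _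
            (List.mem_map_of_mem (Finset.mem_toList.mpr
              (Finset.mem_erase.mpr ⟨hkj, hk⟩)))))
        · simp only [dotp, Fin.sum_univ_three, vv, zv, yv, xv, rowv, colv, qkv, rkv, Matrix.cons_val_zero, Matrix.cons_val_one, Matrix.head_cons, Matrix.cons_val_two, Matrix.tail_cons]; ring
      · refine phi_zero_of_mem yv (List.mem_cons_self) ?_ hlen
        simp [dotp, Fin.sum_univ_three, vv, yv]
    · refine phi_ne_zero (fun w hw => ?_) hlen
      simp only [hL, List.mem_cons, List.mem_append, List.mem_map, Finset.mem_toList,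
        List.mem_replicate] at hw
      rcases hw with rfl | ((⟨i, hi, rfl⟩ | ⟨k, hk, rfl⟩) | ⟨-, rfl⟩)
      · simp [dotp, Fin.sum_univ_three, vv, yv]
        exact bb_ne_zero j₀
      · simp [dotp, Fin.sum_univ_three, vv, rowv]
        exact bb_ne_zero j₀
      · simp only [dotp, Fin.sum_univ_three, vv, qkv, Matrix.cons_val_zero,
          Matrix.cons_val_one, Matrix.head_cons, Matrix.cons_val_two, Matrix.tail_cons]
        have : bb j₀ - bb k ≠ 0 := sub_ne_zero.mpr
          (fun h => (Finset.mem_erase.mp hk).1 (bb_inj h).symm)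
        intro hcon
        apply this
        rw [← hcon]; ring
      · simp [dotp, Fin.sum_univ_three, vv, xv]
  · -- p is an R point j₀ ∈ RS
    set L : List (Fin 3 → ℂ) :=
      zv :: (((univ.toList.map (rowv (n := 2*e))) ++ ((RS.erase j₀).toList.map rkv))
        ++ List.replicate (2*e+3 - RS.card) xv) with hL
    have hcard : 1 ≤ RS.card := Finset.card_pos.mpr ⟨j₀, hj₀⟩
    have hlen : L.length = 4*e+3 := by
      simp [hL, Finset.length_toList, Finset.card_erase_of_mem hj₀]
      omega
    refine ⟨Phi L, ?_, ?_⟩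
    · intro q hq hne
      rcases mem_Sgen.mp hq with ⟨⟨i, j⟩, hcq, rfl⟩ | ⟨k, hk, rfl⟩ | ⟨k, hk, rfl⟩
      · refine phi_zero_of_mem (rowv i) ?_ ?_ hlen
        · exact List.mem_cons_of_mem _ (List.mem_append_left _ (List.mem_append_left _
            (List.mem_map_of_mem (Finset.mem_toList.mpr (Finset.mem_univ _)))))
        · simp only [dotp, Fin.sum_univ_three, vv, zv, yv, xv, rowv, colv, qkv, rkv, Matrix.cons_val_zero, Matrix.cons_val_one, Matrix.head_cons, Matrix.cons_val_two, Matrix.tail_cons]; ring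
      · refine phi_zero_of_mem zv (List.mem_cons_self) ?_ hlen
        simp [dotp, Fin.sum_univ_three, vv, zv]
      · have hkj : k ≠ j₀ := fun h => hne (by rw [h])
        refine phi_zero_of_mem (rkv k) ?_ ?_ hlen
        · exact List.mem_cons_of_mem _ (List.mem_append_left _ (List.mem_append_right _
            (List.mem_map_of_mem (Finset.mem_toList.mpr
              (Finset.mem_erase.mpr ⟨hkj, hk⟩)))))
        · simp only [dotp, Fin.sum_univ_three, vv, zv, yv, xv, rowv, colv, qkv, rkv, Matrix.cons_val_zero, Matrix.cons_val_one, Matrix.head_cons, Matrix.cons_val_two, Matrix.tail_cons]; ring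
    · refine phi_ne_zero (fun w hw => ?_) hlen
      simp only [hL, List.mem_cons, List.mem_append, List.mem_map, Finset.mem_toList,
        List.mem_replicate] at hw
      rcases hw with rfl | ((⟨i, hi, rfl⟩ | ⟨k, hk, rfl⟩) | ⟨-, rfl⟩)
      · simp [dotp, Fin.sum_univ_three, vv, zv]
        exact bb_ne_zero j₀
      · simp only [dotp, Fin.sum_univ_three, vv, rowv, Matrix.cons_val_zero,
          Matrix.cons_val_one, Matrix.head_cons, Matrix.cons_val_two, Matrix.tail_cons]
        simp only [zero_mul, one_mul, mul_zero, zero_add, add_zero, mul_one]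
        exact fun hcon => (mul_ne_zero (neg_ne_zero.mpr (bb_ne_zero i)) (bb_ne_zero j₀))
          (by rw [← hcon]
              try ring)
      · simp only [dotp, Fin.sum_univ_three, vv, rkv, Matrix.cons_val_zero,
          Matrix.cons_val_one, Matrix.head_cons, Matrix.cons_val_two, Matrix.tail_cons]
        have : bb j₀ - bb k ≠ 0 := sub_ne_zero.mpr
          (fun h => (Finset.mem_erase.mp hk).1 (bb_inj h).symm)
        intro hcon
        apply this
        rw [← hcon]; ring
      · simp [dotp, Fin.sum_univ_three, vv, xv]

def gam (e : ℕ) (j : Fin (4*e+5)) : ℂ := Lagrange.nodalWeight Finset.univ bb j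

lemma gam_ne_zero (e : ℕ) (j : Fin (4*e+5)) : gam e j ≠ 0 :=
  Lagrange.nodalWeight_ne_zero (bb_inj.injOn) (Finset.mem_univ j)

lemma linForm_Q (e : ℕ) (j : Fin (4*e+5)) :
    linForm 2 (vv e (.inr (.inl j))) = X 0 + C (bb j) * X 1 := by
  show ∑ i, C (vv e (.inr (.inl j)) i) * X i = _
  rw [Fin.sum_univ_three]
  simp [vv]

lemma linForm_R (e : ℕ) (j : Fin (4*e+5)) :
    linForm 2 (vv e (.inr (.inr j))) = X 0 + C (bb j) * X 2 := by
  show ∑ i, C (vv e (.inr (.inr j)) i) * X i = _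
  rw [Fin.sum_univ_three]
  simp [vv]

lemma Qdep (e : ℕ) :
    ∑ j : Fin (4*e+5), gam e j • (linForm 2 (vv e (.inr (.inl j)))) ^ (4*e+3) = 0 := by
  have h := dep_sum (n := 4*e+5) (D := 4*e+3) (by omega) bb bb_inj (X 0) (X 1)
  rw [← h]
  exact Finset.sum_congr rfl fun j _ => by rw [linForm_Q]; rfl
lemma Rdep (e : ℕ) :
    ∑ j : Fin (4*e+5), gam e j • (linForm 2 (vv e (.inr (.inr j)))) ^ (4*e+3) = 0 := by
  have h := dep_sum (n := 4*e+5) (D := 4*e+3) (by omega) bb bb_inj (X 0) (X 2)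
  rw [← h]
  exact Finset.sum_congr rfl fun j _ => by rw [linForm_R]; rfl

lemma Iio_Ici_split {n : ℕ} (a : Fin n) {M : Type*} [AddCommMonoid M] (f : Fin n → M) :
    ∑ j, f j = ∑ j ∈ Finset.Iio a, f j + ∑ j ∈ Finset.Ici a, f j := by
  rw [← Finset.sum_union ?hd]
  · congr 1
    ext x
    simp [lt_or_ge x a]
  · exact Finset.disjoint_left.mpr fun x hx hx' =>
      absurd (lt_of_lt_of_le (Finset.mem_Iio.mp hx) (Finset.mem_Ici.mp hx')) (lt_irrefl x)

lemma sum_Sgen {e : ℕ} (CS : Finset (Fin (2*e) × Fin (e+1))) (QS RS : Finset (Fin (4*e+5)))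
    {M : Type*} [AddCommMonoid M] (f : Iot e → M) :
    ∑ x ∈ Sgen e CS QS RS, f x =
      (∑ c ∈ CS, f (.inl c)) + (∑ j ∈ QS, f (.inr (.inl j))) + (∑ j ∈ RS, f (.inr (.inr j))) := by
  unfold Sgen
  rw [Finset.sum_union, Finset.sum_union]
  · rw [Finset.sum_image (f := f) (g := Sum.inl) (fun a _ b _ h => Sum.inl_injective h),
        Finset.sum_image (f := f) (g := Sum.inr ∘ Sum.inl)
          (fun a _ b _ h => Sum.inl_injective (Sum.inr_injective h)),
        Finset.sum_image (f := f) (g := Sum.inr ∘ Sum.inr)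
          (fun a _ b _ h => Sum.inr_injective (Sum.inr_injective h))]
    rfl
  · refine Finset.disjoint_left.mpr fun x hx hx' => ?_
    obtain ⟨c, -, rfl⟩ := Finset.mem_image.mp hx
    obtain ⟨j, -, h⟩ := Finset.mem_image.mp hx'
    exact absurd h (by simp)
  · refine Finset.disjoint_left.mpr fun x hx hx' => ?_
    rw [Finset.mem_union] at hx
    obtain ⟨j, -, rfl⟩ := Finset.mem_image.mp hx'
    rcases hx with hx | hx <;> obtain ⟨c, -, h⟩ := Finset.mem_image.mp hx <;>
      exact absurd h (by simp)

lemma card_Sgen {e : ℕ} (CS : Finset (Fin (2*e) × Fin (e+1))) (QS RS : Finset (Fin (4*e+5))) :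
    (Sgen e CS QS RS).card = CS.card + QS.card + RS.card := by
  have h := sum_Sgen CS QS RS (fun _ => (1 : ℕ))
  simp only [Finset.sum_const, smul_eq_mul, mul_one] at h
  exact h

lemma linForm_homog (v : Fin 3 → ℂ) : (linForm 2 v).IsHomogeneous 1 :=
  MvPolynomial.IsHomogeneous.sum _ _ _ fun i _ => isHomogeneous_C_mul_X _ _

lemma homog_term (c : ℂ) (v : Fin 3 → ℂ) (d : ℕ) :
    (c • (linForm 2 v) ^ d).IsHomogeneous d := by
  rw [smul_eq_C_mul]
  have := ((linForm_homog v).pow d).C_mul c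
  simpa using this

theorem stmt17' (e : ℕ) (he : 2 ≤ e) :
    ∃ (T : MvPolynomial (Fin 3) ℂ) (A B : Finset (Proj 2)),
      T ≠ 0 ∧ T.IsHomogeneous (4 * e + 3) ∧
      A.card = Nat.choose (2 * e + 3) 2 + e + 2 ∧
      B.card = Nat.choose (2 * e + 3) 2 + e ∧
      NRComputes 2 (4 * e + 3) A T ∧ NRComputes 2 (4 * e + 3) B T := by
  classical
  have h2e : 0 < 2*e := by omega
  have he1 : 0 < e+1 := by omega
  set z0 : Fin (2*e) × Fin (e+1) := (⟨0, h2e⟩, ⟨0, he1⟩) with hz0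
  set CS : Finset (Fin (2*e) × Fin (e+1)) := Finset.univ.erase z0 with hCS
  set mid : Fin (4*e+5) := ⟨2*e+2, by omega⟩ with hmid
  set QA : Finset (Fin (4*e+5)) := Finset.Ici mid with hQA
  set QB : Finset (Fin (4*e+5)) := Finset.Iio mid with hQB
  have hQAcard : QA.card = 2*e+3 := by
    have : QA.card = (4*e+5) - (2*e+2) := by simp [hQA, Fin.card_Ici, hmid]
    omega
  have hQBcard : QB.card = 2*e+2 := by simp [hQB, Fin.card_Iio, hmid]
  have hCScard : CS.card = 2*(e*e) + 2*e - 1 := by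
    rw [hCS, Finset.card_erase_of_mem (Finset.mem_univ _), Finset.card_univ]
    have : Fintype.card (Fin (2*e) × Fin (e+1)) = 2*(e*e) + 2*e := by
      rw [Fintype.card_prod, Fintype.card_fin, Fintype.card_fin]; ring
    rw [this]
  set SA := Sgen e CS QA QA with hSA
  set SB := Sgen e CS QB QB with hSB
  set aA : Iot e → ℂ :=
    Sum.elim (fun _ => 1) (Sum.elim (fun j => -(gam e j)) (fun j => -(gam e j))) with haA
  set aB : Iot e → ℂ :=
    Sum.elim (fun _ => 1) (Sum.elim (fun j => gam e j) (fun j => gam e j)) with haB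
  have haAne : ∀ i ∈ SA, aA i ≠ 0 := by
    rintro (p | j | j) _ <;>
      simp [haA, Sum.elim_inl, Sum.elim_inr, neg_ne_zero, gam_ne_zero]
  have haBne : ∀ i ∈ SB, aB i ≠ 0 := by
    rintro (p | j | j) _ <;>
      simp [haB, Sum.elim_inl, Sum.elim_inr, gam_ne_zero]
  obtain ⟨hNRA, hcardA⟩ := nr_general (4*e+3) SA (vv e) (vv_ne_zero e)
    (fun i _ j _ h => vv_inj e i j h) aA haAne
    (sep e he CS QA QA (le_of_eq hQAcard) (le_of_eq hQAcard))
  obtain ⟨hNRB, hcardB⟩ := nr_general (4*e+3) SB (vv e) (vv_ne_zero e)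
    (fun i _ j _ h => vv_inj e i j h) aB haBne
    (sep e he CS QB QB (by omega) (by omega))
  -- the two tensors coincide
  have hQsplit := Iio_Ici_split mid
    (fun j => gam e j • linForm 2 (vv e (.inr (.inl j))) ^ (4*e+3))
  have hRsplit := Iio_Ici_split mid
    (fun j => gam e j • linForm 2 (vv e (.inr (.inr j))) ^ (4*e+3))
  have hQ0 := Qdep e
  have hR0 := Rdep e
  rw [hQsplit] at hQ0
  rw [hRsplit] at hR0
  have hQeq : ∑ j ∈ QB, gam e j • linForm 2 (vv e (.inr (.inl j))) ^ (4*e+3)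
      = ∑ j ∈ QA, (-(gam e j)) • linForm 2 (vv e (.inr (.inl j))) ^ (4*e+3) := by
    simp only [neg_smul]
    rw [Finset.sum_neg_distrib]
    exact eq_neg_of_add_eq_zero_left hQ0
  have hReq : ∑ j ∈ QB, gam e j • linForm 2 (vv e (.inr (.inr j))) ^ (4*e+3)
      = ∑ j ∈ QA, (-(gam e j)) • linForm 2 (vv e (.inr (.inr j))) ^ (4*e+3) := by
    simp only [neg_smul]
    rw [Finset.sum_neg_distrib]
    exact eq_neg_of_add_eq_zero_left hR0
  have hTeq : ∑ i ∈ SA, aA i • linForm 2 (vv e i) ^ (4*e+3)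
      = ∑ i ∈ SB, aB i • linForm 2 (vv e i) ^ (4*e+3) := by
    rw [hSA, hSB, sum_Sgen, sum_Sgen]
    simp only [haA, haB, Sum.elim_inl, Sum.elim_inr]
    rw [← hQeq, ← hReq]
  set T := ∑ i ∈ SB, aB i • linForm 2 (vv e i) ^ (4*e+3) with hT
  rw [hTeq] at hNRA
  -- nonemptiness of B
  have hmem0 : (Sum.inr (Sum.inl (⟨0, by omega⟩ : Fin (4*e+5))) : Iot e) ∈ SB := by
    rw [hSB]
    refine mem_Sgen.mpr (Or.inr (Or.inl ⟨⟨0, by omega⟩, ?_, rfl⟩))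
    rw [hQB, Finset.mem_Iio]
    exact Fin.mk_lt_mk.mpr (by omega)
  have hBne : (SB.image (fun i => Projectivization.mk ℂ (vv e i) (vv_ne_zero e i))).Nonempty :=
    ⟨_, Finset.mem_image_of_mem _ hmem0⟩
  have hTne : T ≠ 0 := by
    intro h0
    refine hNRB.2 ∅ (Finset.empty_ssubset.mpr hBne) ?_
    rw [h0]
    exact Submodule.zero_mem _
  have hch : Nat.choose (2*e+3) 2 = 2*(e*e) + 5*e + 3 := by
    rw [Nat.choose_two_right]
    have h1 : 2*e+3-1 = 2*e+2 := by omega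
    rw [h1]
    have h2 : (2*e+3)*(2*e+2) = (2*(e*e) + 5*e + 3)*2 := by ring
    rw [h2, Nat.mul_div_cancel _ (by norm_num)]
  refine ⟨T, SA.image (fun i => Projectivization.mk ℂ (vv e i) (vv_ne_zero e i)),
    SB.image (fun i => Projectivization.mk ℂ (vv e i) (vv_ne_zero e i)),
    hTne, ?_, ?_, ?_, hNRA, hNRB⟩
  · exact MvPolynomial.IsHomogeneous.sum _ _ _ fun i _ => homog_term _ _ _
  · rw [hcardA, hSA, card_Sgen, hCScard, hQAcard, hch]
    have hle : 1 ≤ 2*(e*e) + 2*e := by omega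
    generalize e*e = E at *
    omega
  · rw [hcardB, hSB, card_Sgen, hCScard, hQBcard, hch]
    have hle : 1 ≤ 2*(e*e) + 2*e := by omega
    generalize e*e = E at *
    omega

end Aux2

/-- Sharpness of the rank criterion, `d ≡ 3 (mod 4)`: for `d = 4e+3`, `e ≥ 2`, there is
a nonzero form of degree `d` with a non-redundant decomposition of length
`binom(2e+3,2) + e + 2` and a non-redundant decomposition of length
`binom(2e+3,2) + e`. -/
theorem stmt17 (e : ℕ) (he : 2 ≤ e) :
    ∃ (T : MvPolynomial (Fin 3) ℂ) (A B : Finset (Proj 2)),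
      T ≠ 0 ∧ T.IsHomogeneous (4 * e + 3) ∧
      A.card = Nat.choose (2 * e + 3) 2 + e + 2 ∧
      B.card = Nat.choose (2 * e + 3) 2 + e ∧
      NRComputes 2 (4 * e + 3) A T ∧ NRComputes 2 (4 * e + 3) B T := by
  exact stmt17' e he
end

section
/- Let n ≥ 1, m ≥ 1, and d = 2m + 1 with d ≥ 3. Let T ∈ S^d ℂ^{n+1} be a nonzero form of degree d and let A ⊆ ℙⁿ(ℂ) be a non-redundant finite set computing T, with r = ℓ(A). Assume h_A(1) = min{n+1, r}, k_m(A) = r, and 2·(r − h_A(m−1)) ≤ min{n − 1, m − 1}. Then T has rank r and T is identifiable (A is the unique set of cardinality r computing T). -/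
open MvPolynomial

noncomputable section

namespace Aux19


variable {n : ℕ}

abbrev Pl (n : ℕ) := MvPolynomial (Fin (n + 1)) ℂ

lemma eval_linForm (v w : Fin (n + 1) → ℂ) :
    eval w (linForm n v) = ∑ i, v i * w i := by
  simp [linForm]

lemma linForm_isHom (v : Fin (n + 1) → ℂ) : (linForm n v).IsHomogeneous 1 := by
  apply IsHomogeneous.sum
  intro i _
  simpa using (isHomogeneous_C (Fin (n+1)) (v i)).mul (isHomogeneous_X ℂ i)

lemma linForm_ne_zero {v : Fin (n + 1) → ℂ} (hv : v ≠ 0) : linForm n v ≠ 0 := by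
  obtain ⟨j, hj⟩ : ∃ j, v j ≠ 0 := by
    by_contra h; push_neg at h; exact hv (funext h)
  intro h0
  have : eval (Pi.single j 1) (linForm n v) = 0 := by rw [h0]; simp
  rw [eval_linForm] at this
  simp [Pi.single_apply, Finset.sum_ite_eq'] at this
  exact hj this

lemma vero_isHom (t : ℕ) (P : Proj n) : (vero n t P).IsHomogeneous t := by
  simpa [vero] using (linForm_isHom P.rep).pow t

lemma pderiv_linForm (i : Fin (n + 1)) (v : Fin (n + 1) → ℂ) :
    pderiv i (linForm n v) = C (v i) := by
  simp [linForm, pderiv_X, Pi.single_apply]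

/-- Iterated derivative along a list of indices, as a linear map. -/
def Dl : List (Fin (n + 1)) → Pl n →ₗ[ℂ] Pl n
  | [] => LinearMap.id
  | i :: w => (pderiv i).toLinearMap.comp (Dl w)

@[simp] lemma Dl_nil (p : Pl n) : Dl [] p = p := rfl
@[simp] lemma Dl_cons (i : Fin (n+1)) (w : List (Fin (n+1))) (p : Pl n) :
    Dl (i :: w) p = pderiv i (Dl w p) := rfl

lemma Dl_append_single (w : List (Fin (n+1))) (i : Fin (n+1)) (p : Pl n) :
    Dl (w ++ [i]) p = Dl w (pderiv i p) := by
  induction w with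
  | nil => rfl
  | cons j w ih => simp [ih]

lemma Dl_pow (w : List (Fin (n+1))) (v : Fin (n + 1) → ℂ) (k : ℕ) (hw : w.length ≤ k) :
    Dl w (linForm n v ^ k)
      = ((k.descFactorial w.length : ℂ) * (w.map v).prod) • linForm n v ^ (k - w.length) := by
  induction w with
  | nil => simp
  | cons i w ih =>
      have hw' : w.length ≤ k := le_trans (by simp) hw
      have hlt : w.length < k := lt_of_lt_of_le (by simp) hw
      rw [Dl_cons, ih hw']
      rw [Derivation.map_smul]
      have hp : (pderiv i) (linForm n v ^ (k - w.length))
          = C (((k - w.length : ℕ) : ℂ) * v i) * linForm n v ^ (k - w.length - 1) := by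
        rw [pderiv_pow, pderiv_linForm]
        rw [map_mul]
        rw [map_natCast C (k - w.length)]
        ring
      rw [hp]
      have h1 : k - w.length - 1 = k - (i :: w).length := by
        simp [Nat.sub_sub]
      have h2 : (k.descFactorial (i :: w).length : ℂ)
          = ((k - w.length : ℕ) : ℂ) * (k.descFactorial w.length : ℂ) := by
        rw [show (i :: w).length = w.length + 1 from rfl, Nat.descFactorial_succ]
        push_cast
        ring
      rw [h1, h2]
      simp only [List.map_cons, List.prod_cons, smul_eq_C_mul, map_mul]
      ring



variable {n : ℕ}


/-- canonical list realizing a multi-index -/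
def alist (α : Fin (n+1) →₀ ℕ) : List (Fin (n+1)) := α.toMultiset.toList

lemma alist_length (α : Fin (n+1) →₀ ℕ) : (alist α).length = α.degree := by
  rw [alist, Multiset.length_toList, Finsupp.card_toMultiset, Finsupp.degree]
  rfl

lemma alist_prod (α : Fin (n+1) →₀ ℕ) (u : Fin (n+1) → ℂ) :
    ((alist α).map u).prod = ∏ i, u i ^ α i := by
  have h1 : ((alist α).map u : Multiset ℂ).prod = ((alist α).map u).prod :=
    Multiset.prod_coe _
  rw [← h1, ← Multiset.map_coe, alist, Multiset.coe_toList, Finsupp.toMultiset_map,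
    Finsupp.prod_toMultiset]
  rw [Finsupp.prod_mapDomain_index (by simp) (fun i m₁ m₂ => pow_add _ _ _)]
  exact Finsupp.prod_fintype _ _ (by simp)

/-- the evaluation-space (range of `evalMap`). -/
abbrev Hsp (t : ℕ) (Z : Finset (Proj n)) : Submodule ℂ (↑Z → ℂ) :=
  LinearMap.range (evalMap n t Z)

/-- the span of the `t`-th powers. -/
abbrev Esp (t : ℕ) (Z : Finset (Proj n)) : Submodule ℂ (Pl n) :=
  Submodule.span ℂ (vero n t '' (Z : Set (Proj n)))

/-- monomial function on `Z` -/
def monFn (Z : Finset (Proj n)) (α : Fin (n+1) →₀ ℕ) : (↑Z → ℂ) :=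
  fun R => ∏ i, R.1.rep i ^ α i

lemma monFn_mem_Hsp {Z : Finset (Proj n)} {t : ℕ} {α : Fin (n+1) →₀ ℕ}
    (hα : α.degree = t) : monFn Z α ∈ Hsp t Z := by
  refine ⟨⟨monomial α 1, isHomogeneous_monomial 1 hα⟩, ?_⟩
  funext R
  show eval R.1.rep (monomial α (1:ℂ)) = _
  rw [eval_monomial, one_mul, monFn]
  exact Finsupp.prod_fintype _ _ (by simp)

lemma Hsp_le_span_monFn (Z : Finset (Proj n)) (t : ℕ) :
    Hsp t Z ≤ Submodule.span ℂ {g | ∃ α : Fin (n+1) →₀ ℕ, α.degree = t ∧ g = monFn Z α} := by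
  rintro g ⟨F, rfl⟩
  have hF : F.1.IsHomogeneous t := F.2
  have : (evalMap n t Z) F = ∑ α ∈ F.1.support, (F.1.coeff α) • monFn Z α := by
    funext R
    show eval R.1.rep F.1 = _
    conv_lhs => rw [F.1.as_sum]
    rw [map_sum]
    simp only [eval_monomial, Finset.sum_apply, Pi.smul_apply, smul_eq_mul]
    refine Finset.sum_congr rfl fun α hα => ?_
    congr 1
    rw [monFn]
    exact Finsupp.prod_fintype _ _ (by simp)
  rw [this]
  apply Submodule.sum_mem
  intro α hα
  apply Submodule.smul_mem
  apply Submodule.subset_span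
  have := hF (mem_support_iff.mp hα)
  rw [(show (Finsupp.weight 1 : (Fin (n+1) →₀ ℕ) →+ ℕ) = Finsupp.degree from Finsupp.degree_eq_weight_one.symm)] at this
  exact ⟨α, this, rfl⟩


variable (n) in
/-- linear-combination map onto the `t`-th powers -/
def theta (t : ℕ) (Z : Finset (Proj n)) : (↑Z → ℂ) →ₗ[ℂ] Pl n :=
  Fintype.linearCombination ℂ (fun R : ↑Z => vero n t R.1)

lemma theta_apply (t : ℕ) (Z : Finset (Proj n)) (f : ↑Z → ℂ) :
    theta n t Z f = ∑ R : ↑Z, f R • vero n t R.1 := by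
  simp [theta, Fintype.linearCombination_apply]

lemma range_theta (t : ℕ) (Z : Finset (Proj n)) :
    LinearMap.range (theta n t Z) = Esp t Z := by
  rw [theta, Fintype.range_linearCombination]
  congr 1
  exact (Set.image_eq_range _ _).symm

variable (n) in
/-- the standard pairing on functions `Z → ℂ`. -/
def pairZ (Z : Finset (Proj n)) : (↑Z → ℂ) →ₗ[ℂ] Module.Dual ℂ (↑Z → ℂ) :=
  LinearMap.mk₂ ℂ (fun f g => ∑ R : ↑Z, f R * g R)
    (fun f₁ f₂ g => by simp [Finset.sum_add_distrib, add_mul])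
    (fun c f g => by simp [Finset.mul_sum, mul_assoc])
    (fun f g₁ g₂ => by simp [Finset.sum_add_distrib, mul_add])
    (fun c f g => by
      simp only [Pi.smul_apply, smul_eq_mul, Finset.mul_sum]
      exact Finset.sum_congr rfl fun i _ => by ring)

lemma pairZ_surjective (Z : Finset (Proj n)) : Function.Surjective (pairZ n Z) := by
  intro Φ
  refine ⟨fun R => Φ (Pi.single R (1:ℂ)), ?_⟩
  apply LinearMap.ext
  intro g
  show ∑ R : ↑Z, Φ (Pi.single R (1:ℂ)) * g R = Φ g
  have hg : g = ∑ R : ↑Z, g R • (Pi.single R (1:ℂ) : ↑Z → ℂ) := by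
    rw [← Finset.univ_sum_single g]
    refine Finset.sum_congr rfl fun R _ => ?_
    funext S
    simp [Pi.single_apply]
  conv_rhs => rw [hg]
  rw [map_sum]
  refine Finset.sum_congr rfl fun R _ => ?_
  rw [map_smul]
  simp [mul_comm]

variable (n) in
def psiZ (t : ℕ) (Z : Finset (Proj n)) : (↑Z → ℂ) →ₗ[ℂ] Module.Dual ℂ (Hsp t Z) :=
  (Hsp t Z).dualRestrict ∘ₗ pairZ n Z

lemma psiZ_surjective (t : ℕ) (Z : Finset (Proj n)) : Function.Surjective (psiZ n t Z) :=
  (Subspace.dualRestrict_surjective).comp (pairZ_surjective Z)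

lemma mem_ker_psiZ_iff (t : ℕ) (Z : Finset (Proj n)) (f : ↑Z → ℂ) :
    f ∈ LinearMap.ker (psiZ n t Z) ↔
      ∀ F : Pl n, F.IsHomogeneous t → ∑ R : ↑Z, f R * eval R.1.rep F = 0 := by
  constructor
  · intro hf F hF
    have := LinearMap.congr_fun (LinearMap.mem_ker.mp hf)
      ⟨evalMap n t Z ⟨F, hF⟩, ⟨_, rfl⟩⟩
    simpa [psiZ, pairZ, evalMap] using this
  · intro h
    rw [LinearMap.mem_ker]
    apply LinearMap.ext
    rintro ⟨g, ⟨F, rfl⟩⟩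
    have := h F.1 F.2
    simpa [psiZ, pairZ, evalMap] using this

lemma mem_ker_theta_iff (t : ℕ) (Z : Finset (Proj n)) (f : ↑Z → ℂ) :
    f ∈ LinearMap.ker (theta n t Z) ↔
      ∀ F : Pl n, F.IsHomogeneous t → ∑ R : ↑Z, f R * eval R.1.rep F = 0 := by
  constructor
  · -- apply iterated derivatives to kill all but the α-coefficient data
    intro hf F hF
    -- first reduce to monomial sums
    have key : ∀ α : Fin (n+1) →₀ ℕ, α.degree = t →
        ∑ R : ↑Z, f R * (∏ i, R.1.rep i ^ α i) = 0 := by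
      intro α hα
      have h0 : theta n t Z f = 0 := hf
      have h1 := congrArg (Dl (alist α)) h0
      rw [theta_apply, map_sum, map_zero] at h1
      have h2 : ∀ R : ↑Z, Dl (alist α) (f R • vero n t R.1)
          = ((t.descFactorial t : ℂ) * (f R * ∏ i, R.1.rep i ^ α i)) • (1 : Pl n) := by
        intro R
        rw [map_smul, vero, Dl_pow _ _ _ (by rw [alist_length, hα]),
          alist_length, hα, alist_prod, Nat.sub_self, pow_zero]
        rw [smul_smul]
        ring_nf
      simp only [h2] at h1
      rw [← Finset.sum_smul] at h1
      rw [smul_eq_C_mul, mul_one] at h1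
      have h3 := (MvPolynomial.C_injective (Fin (n+1)) ℂ) (h1.trans (map_zero (C : ℂ →+* Pl n)).symm)
      rw [← Finset.mul_sum] at h3
      have hdf : (t.descFactorial t : ℂ) ≠ 0 := by
        rw [Nat.cast_ne_zero, Ne, Nat.descFactorial_eq_zero_iff_lt]
        exact lt_irrefl t
      exact (mul_eq_zero.mp h3).resolve_left hdf
    -- now expand F into monomials
    have : ∀ R : ↑Z, eval R.1.rep F = ∑ α ∈ F.support, F.coeff α * ∏ i, R.1.rep i ^ α i := by
      intro R
      conv_lhs => rw [F.as_sum]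
      rw [map_sum]
      refine Finset.sum_congr rfl fun α hα => ?_
      rw [eval_monomial]
      congr 1
      exact Finsupp.prod_fintype _ _ (by simp)
    simp only [this, Finset.mul_sum]
    rw [Finset.sum_comm]
    refine Finset.sum_eq_zero fun α hα => ?_
    have hdeg : α.degree = t := by
      have := hF (mem_support_iff.mp hα)
      rwa [(show (Finsupp.weight 1 : (Fin (n+1) →₀ ℕ) →+ ℕ) = Finsupp.degree from Finsupp.degree_eq_weight_one.symm)] at this
    have h4 := key α hdeg
    calc ∑ x : ↑Z, f x * (F.coeff α * ∏ i, x.1.rep i ^ α i)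
        = F.coeff α * ∑ x : ↑Z, f x * ∏ i, x.1.rep i ^ α i := by
          rw [Finset.mul_sum]; exact Finset.sum_congr rfl fun _ _ => by ring
      _ = 0 := by rw [h4, mul_zero]
  · intro h
    rw [LinearMap.mem_ker]
    apply MvPolynomial.funext
    intro c
    rw [theta_apply, map_sum, map_zero]
    have : ∀ R : ↑Z, eval c (f R • vero n t R.1) = f R * eval R.1.rep (linForm n c ^ t) := by
      intro R
      rw [smul_eq_C_mul, map_mul, eval_C]
      congr 1
      rw [vero, map_pow, map_pow, eval_linForm, eval_linForm]
      congr 1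
      exact Finset.sum_congr rfl fun i _ => mul_comm _ _
    simp only [this]
    exact h _ (by simpa using (linForm_isHom c).pow t)

lemma ker_theta_eq_ker_psiZ (t : ℕ) (Z : Finset (Proj n)) :
    LinearMap.ker (theta n t Z) = LinearMap.ker (psiZ n t Z) := by
  ext f
  rw [mem_ker_theta_iff, mem_ker_psiZ_iff]

/-- The bridge: the dimension of the span of `t`-th powers of points of `Z`
equals the Hilbert function of `Z` in degree `t`. -/
lemma finrank_Esp_eq_hilbN (t : ℕ) (Z : Finset (Proj n)) :
    Module.finrank ℂ (Esp t Z : Submodule ℂ (Pl n)) = hilbN n Z t := by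
  have h1 := LinearMap.finrank_range_add_finrank_ker (theta n t Z)
  have h2 := LinearMap.finrank_range_add_finrank_ker (psiZ n t Z)
  rw [ker_theta_eq_ker_psiZ] at h1
  rw [range_theta] at h1
  have h3 : LinearMap.range (psiZ n t Z) = ⊤ :=
    LinearMap.range_eq_top.mpr (psiZ_surjective t Z)
  rw [h3] at h2
  have h4 : Module.finrank ℂ (⊤ : Submodule ℂ (Module.Dual ℂ (Hsp t Z)))
      = hilbN n Z t := by
    rw [finrank_top, Subspace.dual_finrank_eq]
    rfl
  rw [h4] at h2
  omega

lemma eval_linForm_swap (v w : Fin (n + 1) → ℂ) :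
    eval w (linForm n v) = eval v (linForm n w) := by
  rw [eval_linForm, eval_linForm]
  exact Finset.sum_congr rfl fun i _ => mul_comm _ _

lemma exists_avoider (Z : Finset (Proj n)) :
    ∃ c : Fin (n+1) → ℂ, ∀ R : ↑Z, eval R.1.rep (linForm n c) ≠ 0 := by
  have hp : (∏ R : ↑Z, linForm n R.1.rep) ≠ 0 := by
    rw [Finset.prod_ne_zero_iff]
    exact fun R _ => linForm_ne_zero (Projectivization.rep_nonzero R.1)
  have : ∃ c, eval c (∏ R : ↑Z, linForm n R.1.rep) ≠ 0 := by
    by_contra h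
    push_neg at h
    exact hp (MvPolynomial.funext fun c => by rw [h c, map_zero])
  obtain ⟨c, hc⟩ := this
  rw [map_prod] at hc
  rw [Finset.prod_ne_zero_iff] at hc
  exact ⟨c, fun R => by rw [← eval_linForm_swap]; exact hc R (Finset.mem_univ R)⟩

/-- multiplication by a fixed function, as a linear map. -/
def mulFn (Z : Finset (Proj n)) (u : ↑Z → ℂ) : (↑Z → ℂ) →ₗ[ℂ] (↑Z → ℂ) where
  toFun f := fun R => u R * f R
  map_add' f g := by funext R; simp [mul_add]
  map_smul' c f := by funext R; simp; ring

/-- multiplication by an everywhere nonzero function is a linear equivalence. -/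
def mulEquiv (Z : Finset (Proj n)) (u : ↑Z → ℂ) (hu : ∀ R, u R ≠ 0) :
    (↑Z → ℂ) ≃ₗ[ℂ] (↑Z → ℂ) :=
  LinearEquiv.piCongrRight (fun R => LinearEquiv.smulOfNeZero ℂ ℂ (u R) (hu R))

lemma mulEquiv_eq_mulFn (Z : Finset (Proj n)) (u : ↑Z → ℂ) (hu : ∀ R, u R ≠ 0) :
    ((mulEquiv Z u hu : (↑Z → ℂ) ≃ₗ[ℂ] (↑Z → ℂ)) : (↑Z → ℂ) →ₗ[ℂ] (↑Z → ℂ))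
      = mulFn Z u := by
  apply LinearMap.ext
  intro f
  funext R
  simp [mulEquiv, mulFn, LinearEquiv.piCongrRight, LinearEquiv.smulOfNeZero,
    LinearEquiv.smulOfUnit]

/-- the coordinate multiplication operators -/
def coordM (Z : Finset (Proj n)) (i : Fin (n+1)) : (↑Z → ℂ) →ₗ[ℂ] (↑Z → ℂ) :=
  mulFn Z (fun R => R.1.rep i)

lemma coordM_maps_Hsp (Z : Finset (Proj n)) (i : Fin (n+1)) (t : ℕ) :
    Submodule.map (coordM Z i) (Hsp t Z) ≤ Hsp (t+1) Z := by
  rintro g ⟨g', ⟨F, rfl⟩, rfl⟩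
  refine ⟨⟨X i * F.1, ?_⟩, ?_⟩
  · have := (isHomogeneous_X ℂ i).mul F.2
    simpa [add_comm] using this
  · funext R
    show eval R.1.rep (X i * F.1) = _
    rw [map_mul, eval_X]
    rfl

lemma degree_add (x y : Fin (n+1) →₀ ℕ) : (x + y).degree = x.degree + y.degree := by
  have h : ∀ z : Fin (n+1) →₀ ℕ, z.degree = Multiset.card z.toMultiset := fun z => by
    rw [Finsupp.card_toMultiset]; rfl
  rw [h, h, h, Finsupp.toMultiset_add, Multiset.card_add]

lemma degree_single_one (i : Fin (n+1)) : (Finsupp.single i 1 : Fin (n+1) →₀ ℕ).degree = 1 := by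
  have h : (Finsupp.single i 1 : Fin (n+1) →₀ ℕ).degree
      = Multiset.card (Finsupp.single i 1 : Fin (n+1) →₀ ℕ).toMultiset := by
    rw [Finsupp.card_toMultiset]; rfl
  rw [h, Finsupp.toMultiset_single]
  simp

lemma decomp_homog {t : ℕ} {F : Pl n} (hF : F.IsHomogeneous (t+1)) :
    ∃ G : Fin (n+1) → Pl n, (∀ i, (G i).IsHomogeneous t) ∧ F = ∑ i, X i * G i := by
  classical
  set pick : (Fin (n+1) →₀ ℕ) → Fin (n+1) :=
    fun α => if h : α.support.Nonempty then α.support.min' h else 0 with hpick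
  have hdeg : ∀ α ∈ F.support, Finsupp.degree α = t + 1 := by
    intro α hα
    have := hF (mem_support_iff.mp hα)
    rwa [(show (Finsupp.weight 1 : (Fin (n+1) →₀ ℕ) →+ ℕ) = Finsupp.degree from Finsupp.degree_eq_weight_one.symm)] at this
  have hsupp : ∀ α ∈ F.support, α (pick α) ≠ 0 := by
    intro α hα
    have hne : α.support.Nonempty := by
      rw [Finsupp.support_nonempty_iff]
      intro h0
      have := hdeg α hα
      rw [h0, map_zero] at this
      omega
    have : pick α ∈ α.support := by
      rw [hpick]
      simp only [hne, dif_pos]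
      exact α.support.min'_mem hne
    exact Finsupp.mem_support_iff.mp this
  refine ⟨fun i => ∑ α ∈ F.support.filter (fun α => pick α = i),
      monomial (α - Finsupp.single i 1) (F.coeff α), ?_, ?_⟩
  · intro i
    apply IsHomogeneous.sum
    intro α hα
    rw [Finset.mem_filter] at hα
    apply isHomogeneous_monomial
    have hle : Finsupp.single i 1 ≤ α := by
      rw [Finsupp.single_le_iff]
      have := hsupp α hα.1
      rw [hα.2] at this
      omega
    have hadd : (α - Finsupp.single i 1) + Finsupp.single i 1 = α :=
      tsub_add_cancel_of_le hle
    have hdeg' := hdeg α hα.1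
    rw [← hadd, degree_add, degree_single_one] at hdeg'
    omega
  · show F = ∑ i : Fin (n+1), X i * ∑ α ∈ F.support.filter (fun α => pick α = i),
        monomial (α - Finsupp.single i 1) (F.coeff α)
    conv_lhs => rw [F.as_sum]
    rw [← Finset.sum_fiberwise_of_maps_to (fun α _ => Finset.mem_univ (pick α))
      (fun α => monomial α (F.coeff α))]
    refine Finset.sum_congr rfl fun i _ => ?_
    rw [Finset.mul_sum]
    refine Finset.sum_congr rfl fun α hα => ?_
    rw [Finset.mem_filter] at hα
    have hle : Finsupp.single i 1 ≤ α := by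
      rw [Finsupp.single_le_iff]
      have := hsupp α hα.1
      rw [hα.2] at this
      omega
    rw [X, monomial_mul, one_mul]
    have hid : (Finsupp.single i 1) + (α - Finsupp.single i 1) = α :=
      add_tsub_cancel_of_le hle
    rw [hid]

lemma Hsp_succ_eq_sup (Z : Finset (Proj n)) (t : ℕ) :
    Hsp (t+1) Z = ⨆ i, Submodule.map (coordM Z i) (Hsp t Z) := by
  apply le_antisymm
  · rintro g ⟨F, rfl⟩
    obtain ⟨G, hG, hFG⟩ := decomp_homog (F.2 : (F : Pl n).IsHomogeneous (t+1))
    have : evalMap n (t+1) Z F = ∑ i, (coordM Z i) (evalMap n t Z ⟨G i, hG i⟩) := by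
      funext R
      show eval R.1.rep F.1 = _
      conv_lhs => rw [hFG]
      rw [map_sum]
      simp only [Finset.sum_apply]
      refine Finset.sum_congr rfl fun i _ => ?_
      rw [map_mul, eval_X]
      rfl
    rw [this]
    apply Submodule.sum_mem
    intro i _
    exact le_iSup (fun i => Submodule.map (coordM Z i) (Hsp t Z)) i
      (Submodule.mem_map_of_mem ⟨⟨G i, hG i⟩, rfl⟩)
  · exact iSup_le fun i => le_trans (coordM_maps_Hsp Z i t) le_rfl

instance instFD (Z : Finset (Proj n)) : FiniteDimensional ℂ (↑Z → ℂ) :=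
  Module.Finite.pi

instance instFDHsp (Z : Finset (Proj n)) (t : ℕ) : Module.Finite ℂ (Hsp t Z) :=
  FiniteDimensional.finiteDimensional_submodule _

lemma hilbN_le_card (Z : Finset (Proj n)) (t : ℕ) : hilbN n Z t ≤ Z.card := by
  have := Submodule.finrank_le (Hsp t Z)
  rwa [Module.finrank_fintype_fun_eq_card, Fintype.card_coe] at this

lemma map_mulFn_Hsp_le (Z : Finset (Proj n)) (c : Fin (n+1) → ℂ) (t : ℕ) :
    Submodule.map (mulFn Z (fun R => eval R.1.rep (linForm n c))) (Hsp t Z)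
      ≤ Hsp (t+1) Z := by
  rintro g ⟨g', ⟨F, rfl⟩, rfl⟩
  have hh : (linForm n c * F.1).IsHomogeneous (t+1) := by
    have := (linForm_isHom c).mul F.2
    rwa [Nat.add_comm 1 t] at this
  refine ⟨⟨linForm n c * F.1, hh⟩, ?_⟩
  funext R
  show eval R.1.rep (linForm n c * F.1) = _
  rw [map_mul]
  rfl

lemma finrank_map_mulFn (Z : Finset (Proj n)) (u : ↑Z → ℂ) (hu : ∀ R, u R ≠ 0)
    (W : Submodule ℂ (↑Z → ℂ)) :
    Module.finrank ℂ (Submodule.map (mulFn Z u) W) = Module.finrank ℂ W := by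
  rw [← mulEquiv_eq_mulFn Z u hu]
  exact LinearEquiv.finrank_map_eq (mulEquiv Z u hu) W

lemma hilbN_mono_succ (Z : Finset (Proj n)) (t : ℕ) : hilbN n Z t ≤ hilbN n Z (t+1) := by
  obtain ⟨c, hc⟩ := exists_avoider Z
  have h1 := map_mulFn_Hsp_le Z c t
  have h2 := finrank_map_mulFn Z _ hc (Hsp t Z)
  calc hilbN n Z t = Module.finrank ℂ (Submodule.map
        (mulFn Z (fun R => eval R.1.rep (linForm n c))) (Hsp t Z)) := h2.symm
    _ ≤ hilbN n Z (t+1) := Submodule.finrank_mono h1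

lemma hilbN_mono (Z : Finset (Proj n)) {s t : ℕ} (h : s ≤ t) : hilbN n Z s ≤ hilbN n Z t := by
  induction t with
  | zero => simpa [Nat.le_zero.mp h]
  | succ t ih =>
      rcases Nat.lt_or_ge s (t+1) with h' | h'
      · exact le_trans (ih (Nat.lt_succ_iff.mp h')) (hilbN_mono_succ Z t)
      · have : s = t + 1 := le_antisymm h h'
        rw [this]

lemma mulFn_comm_coordM (Z : Finset (Proj n)) (u : ↑Z → ℂ) (i : Fin (n+1)) :
    (mulFn Z u) ∘ₗ (coordM Z i) = (coordM Z i) ∘ₗ (mulFn Z u) := by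
  apply LinearMap.ext
  intro f
  funext R
  show u R * (R.1.rep i * f R) = R.1.rep i * (u R * f R)
  ring

lemma plateau_step (Z : Finset (Proj n)) (t : ℕ)
    (h : hilbN n Z t = hilbN n Z (t+1)) : hilbN n Z (t+1) = hilbN n Z (t+2) := by
  obtain ⟨c, hc⟩ := exists_avoider Z
  set u : ↑Z → ℂ := fun R => eval R.1.rep (linForm n c) with hu
  have h1 : Submodule.map (mulFn Z u) (Hsp t Z) = Hsp (t+1) Z := by
    apply Submodule.eq_of_le_of_finrank_le (map_mulFn_Hsp_le Z c t)
    rw [finrank_map_mulFn Z u hc]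
    exact le_of_eq h.symm
  have hswap : ∀ i, Submodule.map (coordM Z i) (Submodule.map (mulFn Z u) (Hsp t Z))
      = Submodule.map (mulFn Z u) (Submodule.map (coordM Z i) (Hsp t Z)) := by
    intro i
    rw [← Submodule.map_comp, ← Submodule.map_comp, mulFn_comm_coordM]
  have h2 : Hsp (t+2) Z = Submodule.map (mulFn Z u) (Hsp (t+1) Z) :=
    calc Hsp (t+2) Z = ⨆ i, Submodule.map (coordM Z i) (Hsp (t+1) Z) :=
          Hsp_succ_eq_sup Z (t+1)
      _ = ⨆ i, Submodule.map (coordM Z i) (Submodule.map (mulFn Z u) (Hsp t Z)) := by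
          rw [h1]
      _ = ⨆ i, Submodule.map (mulFn Z u) (Submodule.map (coordM Z i) (Hsp t Z)) := by
          simp_rw [hswap]
      _ = Submodule.map (mulFn Z u) (⨆ i, Submodule.map (coordM Z i) (Hsp t Z)) :=
          (Submodule.map_iSup _ _).symm
      _ = Submodule.map (mulFn Z u) (Hsp (t+1) Z) := by rw [← Hsp_succ_eq_sup Z t]
  rw [show hilbN n Z (t+2) = Module.finrank ℂ (Hsp (t+2) Z) from rfl, h2,
    finrank_map_mulFn Z u hc]
  rfl

lemma plateau (Z : Finset (Proj n)) {t : ℕ}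
    (h : hilbN n Z t = hilbN n Z (t+1)) :
    ∀ s, t ≤ s → hilbN n Z s = hilbN n Z t := by
  have key : ∀ k, hilbN n Z (t+k) = hilbN n Z t ∧ hilbN n Z (t+k+1) = hilbN n Z t := by
    intro k
    induction k with
    | zero => exact ⟨rfl, h.symm⟩
    | succ k ih =>
        refine ⟨by rw [show t+(k+1) = t+k+1 from rfl, ih.2], ?_⟩
        have := plateau_step Z (t+k) (by rw [ih.1, ih.2])
        rw [show t+(k+1)+1 = t+k+2 from rfl, ← this, ih.2]
  intro s hs
  obtain ⟨k, rfl⟩ := Nat.exists_eq_add_of_le hs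
  exact (key k).1

lemma dot_single (k : Fin (n+1)) (a : ℂ) (v : Fin (n+1) → ℂ) :
    ∑ i, (Pi.single k a : Fin (n+1) → ℂ) i * v i = a * v k := by
  simp [Pi.single_apply, ite_mul, Finset.sum_ite_eq]

lemma sep_form {P Q : Proj n} (hPQ : P ≠ Q) :
    ∃ c : Fin (n+1) → ℂ, eval Q.rep (linForm n c) = 0 ∧ eval P.rep (linForm n c) ≠ 0 := by
  by_contra hcon
  push_neg at hcon
  obtain ⟨j, hj⟩ : ∃ j, Q.rep j ≠ 0 := by
    by_contra h; push_neg at h; exact Q.rep_nonzero (funext h)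
  have key : ∀ k, P.rep k - (Q.rep k / Q.rep j) * P.rep j = 0 := by
    intro k
    set a : ℂ := Q.rep k / Q.rep j with ha
    set c : Fin (n+1) → ℂ :=
      fun i => (Pi.single k (1:ℂ) : Fin (n+1) → ℂ) i
        - a * (Pi.single j (1:ℂ) : Fin (n+1) → ℂ) i with hcdef
    have hev : ∀ w : Fin (n+1) → ℂ, eval w (linForm n c) = w k - a * w j := by
      intro w
      rw [eval_linForm]
      have hterm : ∀ i, c i * w i = (Pi.single k (1:ℂ) : Fin (n+1) → ℂ) i * w i
          - a * ((Pi.single j (1:ℂ) : Fin (n+1) → ℂ) i * w i) := by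
        intro i; rw [hcdef]; ring
      rw [Finset.sum_congr rfl (fun i _ => hterm i), Finset.sum_sub_distrib,
        ← Finset.mul_sum, dot_single, dot_single]
      ring
    have hc0 : eval Q.rep (linForm n c) = 0 := by
      rw [hev, ha]
      field_simp
      ring
    have := hcon c hc0
    rw [hev] at this
    exact this
  have hPv : P.rep = (P.rep j / Q.rep j) • Q.rep := by
    funext k
    have h2 : P.rep k = (Q.rep k / Q.rep j) * P.rep j := by linear_combination key k
    rw [h2]
    show _ = (P.rep j / Q.rep j) * Q.rep k
    field_simp
  apply hPQ
  have ha : (P.rep j / Q.rep j) ≠ 0 := by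
    intro h0
    apply P.rep_nonzero
    rw [hPv, h0, zero_smul]
  calc P = Projectivization.mk ℂ P.rep P.rep_nonzero := (Projectivization.mk_rep P).symm
    _ = Projectivization.mk ℂ Q.rep Q.rep_nonzero := by
        rw [(Projectivization.mk_eq_mk_iff ℂ _ _ _ _)]
        refine ⟨Units.mk0 _ ha, ?_⟩
        conv_rhs => rw [hPv]
        rfl
    _ = Q := Projectivization.mk_rep Q

lemma hilbN_sep (Z : Finset (Proj n)) (hZ : Z.Nonempty) :
    hilbN n Z (Z.card - 1) = Z.card := by
  classical
  have htop : Hsp (Z.card - 1) Z = ⊤ := by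
    rw [Submodule.eq_top_iff']
    intro f
    have hsingle : ∀ R₀ : ↑Z, (Pi.single R₀ (1:ℂ) : ↑Z → ℂ) ∈ Hsp (Z.card - 1) Z := by
      intro R₀
      choose c hc0 hc1 using fun (R : ↑Z) (h : R ≠ R₀) =>
        sep_form (P := R₀.1) (Q := R.1)
          (fun he : R₀.1 = R.1 => h (Subtype.ext he.symm))
      set E := (Finset.univ.erase R₀).attach with hE
      have hmem : ∀ R : {x // x ∈ Finset.univ.erase R₀}, R.1 ≠ R₀ :=
        fun R => (Finset.mem_erase.mp R.2).1
      set F : Pl n := ∏ R ∈ E, linForm n (c R.1 (hmem R)) with hF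
      have hFhom : F.IsHomogeneous (Z.card - 1) := by
        have := IsHomogeneous.prod E (fun R => linForm n (c R.1 (hmem R))) (fun _ => 1)
          (fun R _ => linForm_isHom _)
        have hcard : ∑ _R ∈ E, 1 = Z.card - 1 := by
          rw [Finset.sum_const, smul_eq_mul, mul_one, hE, Finset.card_attach,
            Finset.card_erase_of_mem (Finset.mem_univ R₀), Finset.card_univ,
            Fintype.card_coe]
        rwa [hcard] at this
      have hval0 : ∀ S : ↑Z, S ≠ R₀ → eval S.1.rep F = 0 := by
        intro S hS
        rw [hF, map_prod]
        exact Finset.prod_eq_zero (Finset.mem_attach _ ⟨S, Finset.mem_erase.mpr ⟨hS, Finset.mem_univ S⟩⟩)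
          (hc0 S hS)
      have hval1 : eval R₀.1.rep F ≠ 0 := by
        rw [hF, map_prod, Finset.prod_ne_zero_iff]
        exact fun R _ => hc1 R.1 (hmem R)
      have hmemHsp : evalMap n (Z.card - 1) Z ⟨F, hFhom⟩ ∈ Hsp (Z.card - 1) Z := ⟨_, rfl⟩
      have heq : (Pi.single R₀ (1:ℂ) : ↑Z → ℂ)
          = (eval R₀.1.rep F)⁻¹ • evalMap n (Z.card - 1) Z ⟨F, hFhom⟩ := by
        funext S
        by_cases hS : S = R₀
        · subst hS
          show _ = (eval S.1.rep F)⁻¹ * eval S.1.rep F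
          rw [inv_mul_cancel₀ hval1]
          simp
        · show (Pi.single R₀ (1:ℂ) : ↑Z → ℂ) S = (eval R₀.1.rep F)⁻¹ * eval S.1.rep F
          rw [hval0 S hS, Pi.single_apply, if_neg hS, mul_zero]
      rw [heq]
      exact Submodule.smul_mem _ _ hmemHsp
    have hf : f = ∑ R : ↑Z, f R • (Pi.single R (1:ℂ) : ↑Z → ℂ) := by
      rw [← Finset.univ_sum_single f]
      refine Finset.sum_congr rfl fun R _ => ?_
      funext S
      simp [Pi.single_apply]
    rw [hf]
    exact Submodule.sum_mem _ fun R _ => Submodule.smul_mem _ _ (hsingle R)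
  show Module.finrank ℂ (Hsp (Z.card - 1) Z) = Z.card
  rw [htop, finrank_top, Module.finrank_fintype_fun_eq_card, Fintype.card_coe]

lemma image_vero_eq_range (t : ℕ) (Z : Finset (Proj n)) :
    vero n t '' (Z : Set (Proj n)) = Set.range (fun P : ↑Z => vero n t P.1) := by
  ext x
  simp

lemma esp_eq_span_range (t : ℕ) (Z : Finset (Proj n)) :
    (Esp t Z : Submodule ℂ (Pl n))
      = Submodule.span ℂ (Set.range (fun P : ↑Z => vero n t P.1)) := by
  show Submodule.span ℂ (vero n t '' (Z : Set (Proj n))) = _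
  rw [image_vero_eq_range]

/-- unpacking full Kruskal rank -/
lemma li_of_kruskal {m : ℕ} {A : Finset (Proj n)} (hk : kruskalRank n m A = A.card) :
    LinearIndependent ℂ (fun P : ↑A => vero n m P.1) := by
  classical
  set S := {k | k ≤ A.card ∧
    ∀ A' ⊆ A, A'.card ≤ k → LinearIndependent ℂ (fun P : A' => vero n m P.1)} with hS
  have h0 : 0 ∈ S := by
    refine ⟨Nat.zero_le _, fun A' _ hcard => ?_⟩
    have : A' = ∅ := Finset.card_eq_zero.mp (Nat.le_zero.mp hcard)
    subst this
    haveI : IsEmpty ((∅ : Finset (Proj n)) : Finset (Proj n)) :=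
      Finset.isEmpty_coe_sort.mpr rfl
    exact linearIndependent_empty_type
  have hbdd : BddAbove S := ⟨A.card, fun k hk => hk.1⟩
  have hmem := Nat.sSup_mem ⟨0, h0⟩ hbdd
  rw [show sSup S = kruskalRank n m A from rfl, hk] at hmem
  exact hmem.2 A Finset.Subset.rfl le_rfl

lemma finrank_Esp_of_li {m : ℕ} {A : Finset (Proj n)}
    (li : LinearIndependent ℂ (fun P : ↑A => vero n m P.1)) :
    Module.finrank ℂ (Esp m A : Submodule ℂ (Pl n)) = A.card := by
  rw [esp_eq_span_range, finrank_span_eq_card li, Fintype.card_coe]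

lemma Hsp_top_of_li {m : ℕ} {A : Finset (Proj n)}
    (li : LinearIndependent ℂ (fun P : ↑A => vero n m P.1)) :
    ∀ t, m ≤ t → Hsp t A = (⊤ : Submodule ℂ (↑A → ℂ)) := by
  have hm : hilbN n A m = A.card := by
    rw [← finrank_Esp_eq_hilbN]
    exact finrank_Esp_of_li li
  intro t ht
  have h1 : hilbN n A t = A.card :=
    le_antisymm (hilbN_le_card A t) (hm ▸ hilbN_mono A ht)
  apply Submodule.eq_top_of_finrank_eq
  rw [Module.finrank_fintype_fun_eq_card, Fintype.card_coe]
  exact h1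

/-- existence of a representation with all coefficients nonzero, from non-redundancy -/
lemma rep_exists {d : ℕ} {A : Finset (Proj n)} {T : Pl n} (hA : NRComputes n d A T) :
    ∃ a : ↑A → ℂ, (∀ P, a P ≠ 0) ∧ T = ∑ P : ↑A, a P • vero n d P.1 := by
  classical
  have h1 : T ∈ Submodule.span ℂ (Set.range (fun P : ↑A => vero n d P.1)) := by
    rw [← image_vero_eq_range]; exact hA.1
  obtain ⟨a, ha⟩ := (Submodule.mem_span_range_iff_exists_fun ℂ).mp h1
  refine ⟨a, ?_, ha.symm⟩
  intro P₀ hP₀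
  apply hA.2 (A.erase P₀.1) (Finset.erase_ssubset P₀.2)
  have : T = ∑ P ∈ Finset.univ.erase P₀, a P • vero n d P.1 := by
    rw [← ha, ← Finset.sum_erase_add _ _ (Finset.mem_univ P₀), hP₀, zero_smul, add_zero]
  rw [Computes, this]
  apply Submodule.sum_mem
  intro P hP
  apply Submodule.smul_mem
  apply Submodule.subset_span
  refine ⟨P.1, ?_, rfl⟩
  rw [Finset.coe_erase]
  exact ⟨P.2, fun h => (Finset.mem_erase.mp hP).1 (Subtype.ext h)⟩

lemma rep_exists' {d : ℕ} {B : Finset (Proj n)} {T : Pl n} (hB : Computes n d B T) :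
    ∃ b : ↑B → ℂ, T = ∑ Q : ↑B, b Q • vero n d Q.1 := by
  have h1 : T ∈ Submodule.span ℂ (Set.range (fun Q : ↑B => vero n d Q.1)) := by
    rw [← image_vero_eq_range]; exact hB
  obtain ⟨b, hb⟩ := (Submodule.mem_span_range_iff_exists_fun ℂ).mp h1
  exact ⟨b, hb.symm⟩

/-- The key lemma: comparing two representations through iterated derivatives. -/
lemma esp_le_of_reps {d j : ℕ} (hj : j ≤ d) {A B : Finset (Proj n)} {T : Pl n}
    (a : ↑A → ℂ) (ha : ∀ P, a P ≠ 0) (hTA : T = ∑ P : ↑A, a P • vero n d P.1)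
    (b : ↑B → ℂ) (hTB : T = ∑ Q : ↑B, b Q • vero n d Q.1)
    (htop : Hsp (d - j) A = (⊤ : Submodule ℂ (↑A → ℂ))) :
    (Esp j A : Submodule ℂ (Pl n)) ≤ Esp j B := by
  classical
  set c : ℂ := (d.descFactorial (d - j) : ℂ) with hc
  have hc0 : c ≠ 0 := by
    rw [hc, Nat.cast_ne_zero, Ne, Nat.descFactorial_eq_zero_iff_lt]
    omega
  -- the derivative of T along any list of length d - j lies in Esp j B
  have hDlB : ∀ w : List (Fin (n+1)), w.length = d - j → Dl w T ∈ (Esp j B : Submodule ℂ (Pl n)) := by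
    intro w hw
    rw [hTB, map_sum]
    apply Submodule.sum_mem
    intro Q _
    rw [map_smul, vero, Dl_pow _ _ _ (by omega), hw, Nat.sub_sub_self hj]
    apply Submodule.smul_mem
    apply Submodule.smul_mem
    exact Submodule.subset_span ⟨Q.1, Q.2, rfl⟩
  -- the coefficient extraction map
  set Λ : (↑A → ℂ) →ₗ[ℂ] Pl n :=
    (theta n j A) ∘ₗ (mulFn A a) with hΛ
  have hΛapp : ∀ g : ↑A → ℂ, Λ g = ∑ P : ↑A, (a P * g P) • vero n j P.1 := by
    intro g
    rw [hΛ]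
    simp only [LinearMap.comp_apply]
    rw [theta_apply]
    rfl
  -- Λ of a monomial function is a multiple of a derivative of T
  have hper : ∀ (α : Fin (n+1) →₀ ℕ), α.degree = d - j → ∀ P : ↑A,
      Dl (alist α) (a P • vero n d P.1) = (c * (a P * monFn A α P)) • vero n j P.1 := by
    intro α hα P
    rw [map_smul, vero, Dl_pow _ _ _ (by rw [alist_length, hα]; omega),
      alist_length, hα, Nat.sub_sub_self hj, alist_prod, smul_smul]
    rw [show monFn A α P = ∏ i, P.1.rep i ^ α i from rfl]
    rw [show vero n j P.1 = linForm n P.1.rep ^ j from rfl]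
    congr 1
    ring
  have hmon : ∀ α : Fin (n+1) →₀ ℕ, α.degree = d - j →
      Λ (monFn A α) = c⁻¹ • Dl (alist α) T := by
    intro α hα
    rw [hTA, map_sum, Finset.smul_sum, hΛapp]
    refine Finset.sum_congr rfl fun P _ => ?_
    rw [hper α hα P, smul_smul, ← mul_assoc, inv_mul_cancel₀ hc0, one_mul]
  -- span of monomial functions is everything
  have hspan : Submodule.span ℂ
      {g : ↑A → ℂ | ∃ α : Fin (n+1) →₀ ℕ, α.degree = d - j ∧ g = monFn A α}
      = (⊤ : Submodule ℂ (↑A → ℂ)) := by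
    apply top_unique
    rw [← htop]
    exact Hsp_le_span_monFn A (d - j)
  have hmapΛ : ∀ g : ↑A → ℂ, Λ g ∈ (Esp j B : Submodule ℂ (Pl n)) := by
    intro g
    have hg : g ∈ Submodule.span ℂ
        {g : ↑A → ℂ | ∃ α : Fin (n+1) →₀ ℕ, α.degree = d - j ∧ g = monFn A α} := by
      rw [hspan]; exact Submodule.mem_top
    induction hg using Submodule.span_induction with
    | mem x hx =>
        obtain ⟨α, hα, rfl⟩ := hx
        rw [hmon α hα]
        exact Submodule.smul_mem _ _ (hDlB (alist α) (by rw [alist_length, hα]))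
    | zero => rw [map_zero]; exact Submodule.zero_mem _
    | add x y _ _ hx hy => rw [map_add]; exact Submodule.add_mem _ hx hy
    | smul t x _ hx => rw [map_smul]; exact Submodule.smul_mem _ _ hx
  -- Esp j A is exactly the range of Λ
  have hrange : (Esp j A : Submodule ℂ (Pl n)) = LinearMap.range Λ := by
    rw [hΛ, LinearMap.range_comp, ← mulEquiv_eq_mulFn A a ha,
      LinearEquiv.range (mulEquiv A a ha),
      Submodule.map_top, range_theta]
  rw [hrange]
  rintro x ⟨g, rfl⟩
  exact hmapΛ g

lemma hilbN_A_eq_card {m : ℕ} {A : Finset (Proj n)}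
    (li : LinearIndependent ℂ (fun P : ↑A => vero n m P.1)) {t : ℕ} (ht : m ≤ t) :
    hilbN n A t = A.card := by
  rw [show hilbN n A t = Module.finrank ℂ (Hsp t A) from rfl, Hsp_top_of_li li t ht,
    finrank_top, Module.finrank_fintype_fun_eq_card, Fintype.card_coe]

lemma finrank_Esp_le_card (t : ℕ) (B : Finset (Proj n)) :
    Module.finrank ℂ (Esp t B : Submodule ℂ (Pl n)) ≤ B.card := by
  have h1 : (Esp t B : Submodule ℂ (Pl n))
      = Submodule.span ℂ ((B.image (vero n t) : Finset (Pl n)) : Set (Pl n)) := by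
    show Submodule.span ℂ (vero n t '' (B : Set (Proj n))) = _
    rw [Finset.coe_image]
  rw [h1]
  exact le_trans (finrank_span_finset_le_card _) (Finset.card_image_le)

lemma rank_lower {m d : ℕ} (hd : d = 2 * m + 1) {A : Finset (Proj n)} {T : Pl n}
    (hA : NRComputes n d A T)
    (li : LinearIndependent ℂ (fun P : ↑A => vero n m P.1)) :
    ∀ B : Finset (Proj n), Computes n d B T → A.card ≤ B.card := by
  intro B hB
  obtain ⟨a, ha, hTa⟩ := rep_exists hA
  obtain ⟨b, hTb⟩ := rep_exists' hB
  have hle : (Esp m A : Submodule ℂ (Pl n)) ≤ Esp m B :=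
    esp_le_of_reps (by omega) a ha hTa b hTb
      (by rw [show d - m = m + 1 by omega]; exact Hsp_top_of_li li (m+1) (by omega))
  haveI : Module.Finite ℂ (Esp m B : Submodule ℂ (Pl n)) :=
    FiniteDimensional.span_of_finite ℂ ((B.finite_toSet).image _)
  calc A.card = Module.finrank ℂ (Esp m A : Submodule ℂ (Pl n)) :=
        (finrank_Esp_of_li li).symm
    _ ≤ Module.finrank ℂ (Esp m B : Submodule ℂ (Pl n)) := Submodule.finrank_mono hle
    _ ≤ B.card := finrank_Esp_le_card m B

lemma unique_comp {m d : ℕ} (hd : d = 2 * m + 1) {A : Finset (Proj n)} {T : Pl n}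
    (hA : NRComputes n d A T)
    (li : LinearIndependent ℂ (fun P : ↑A => vero n m P.1)) :
    ∀ B : Finset (Proj n), B.card = A.card → Computes n d B T → B = A := by
  intro B hcard hB
  obtain ⟨a, ha, hTa⟩ := rep_exists hA
  obtain ⟨b, hTb⟩ := rep_exists' hB
  haveI : Module.Finite ℂ (Esp m B : Submodule ℂ (Pl n)) :=
    FiniteDimensional.span_of_finite ℂ ((B.finite_toSet).image _)
  haveI : Module.Finite ℂ (Esp (m+1) B : Submodule ℂ (Pl n)) :=
    FiniteDimensional.span_of_finite ℂ ((B.finite_toSet).image _)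
  have hleM : (Esp m A : Submodule ℂ (Pl n)) ≤ Esp m B :=
    esp_le_of_reps (by omega) a ha hTa b hTb
      (by rw [show d - m = m + 1 by omega]; exact Hsp_top_of_li li (m+1) (by omega))
  have hleM1 : (Esp (m+1) A : Submodule ℂ (Pl n)) ≤ Esp (m+1) B :=
    esp_le_of_reps (by omega) a ha hTa b hTb
      (by rw [show d - (m+1) = m by omega]; exact Hsp_top_of_li li m le_rfl)
  have hfrA_m : Module.finrank ℂ (Esp m A : Submodule ℂ (Pl n)) = A.card :=
    finrank_Esp_of_li li
  have hfrA_m1 : Module.finrank ℂ (Esp (m+1) A : Submodule ℂ (Pl n)) = A.card := by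
    rw [finrank_Esp_eq_hilbN]
    exact hilbN_A_eq_card li (by omega)
  have hEq_m : (Esp m A : Submodule ℂ (Pl n)) = Esp m B :=
    Submodule.eq_of_le_of_finrank_le hleM
      (le_trans (finrank_Esp_le_card m B) (by rw [hcard, hfrA_m]))
  have hEq_m1 : (Esp (m+1) A : Submodule ℂ (Pl n)) = Esp (m+1) B :=
    Submodule.eq_of_le_of_finrank_le hleM1
      (le_trans (finrank_Esp_le_card (m+1) B) (by rw [hcard, hfrA_m1]))
  have hBA : B ⊆ A := by
    intro Q₀ hQ₀
    by_contra hQA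
    classical
    set Z : Finset (Proj n) := insert Q₀ A with hZ
    have hcardZ : Z.card = A.card + 1 := Finset.card_insert_of_notMem hQA
    have hespZ : ∀ j : ℕ, vero n j Q₀ ∈ (Esp j A : Submodule ℂ (Pl n)) →
        (Esp j Z : Submodule ℂ (Pl n)) = Esp j A := by
      intro j hmem
      show Submodule.span ℂ (vero n j '' ((insert Q₀ A : Finset (Proj n)) : Set (Proj n))) = _
      rw [Finset.coe_insert, Set.image_insert_eq, Submodule.span_insert]
      exact sup_eq_right.mpr ((Submodule.span_singleton_le_iff_mem _ _).mpr hmem)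
    have hQm : vero n m Q₀ ∈ (Esp m A : Submodule ℂ (Pl n)) := by
      rw [hEq_m]
      exact Submodule.subset_span ⟨Q₀, hQ₀, rfl⟩
    have hQm1 : vero n (m+1) Q₀ ∈ (Esp (m+1) A : Submodule ℂ (Pl n)) := by
      rw [hEq_m1]
      exact Submodule.subset_span ⟨Q₀, hQ₀, rfl⟩
    have h1 : hilbN n Z m = A.card := by
      rw [← finrank_Esp_eq_hilbN, hespZ m hQm, hfrA_m]
    have h2 : hilbN n Z (m+1) = A.card := by
      rw [← finrank_Esp_eq_hilbN, hespZ (m+1) hQm1, hfrA_m1]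
    have hplateau := plateau Z (h1.trans h2.symm)
    have hsep := hilbN_sep Z (Finset.insert_nonempty _ _)
    set s : ℕ := max m (Z.card - 1) with hs
    have e1 : hilbN n Z s = A.card := by
      rw [hplateau s (le_max_left _ _), h1]
    have e2 : hilbN n Z (Z.card - 1) ≤ hilbN n Z s := hilbN_mono Z (le_max_right _ _)
    rw [hsep, e1] at e2
    omega
  exact Finset.eq_of_subset_of_card_le hBA (le_of_eq hcard.symm)

end Aux19

end

/-- Proposition (many variables, odd case): if `d = 2m+1 ≥ 3`, `n ≥ 1`,
`h_A(1) = min{n+1, r}`, `k_m(A) = r` and `2(r - h_A(m-1)) ≤ min{n-1, m-1}`, then `T`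
has rank `r` and is identifiable. -/
theorem stmt19 (n m : ℕ) (hn : 1 ≤ n) (hm : 1 ≤ m) (d : ℕ) (hd : d = 2 * m + 1)
    (hd3 : 3 ≤ d)
    (T : MvPolynomial (Fin (n + 1)) ℂ) (hT0 : T ≠ 0) (hTh : T.IsHomogeneous d)
    (A : Finset (Proj n)) (hA : NRComputes n d A T) (r : ℕ) (hr : r = A.card)
    (h1 : hilbN n A 1 = min (n + 1) r)
    (hk : kruskalRank n m A = r)
    (h2 : 2 * ((r : ℤ) - (hilbN n A (m - 1) : ℤ)) ≤ min ((n : ℤ) - 1) ((m : ℤ) - 1)) :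
    waringRank n d T = r ∧ Identifiable n d T := by
  subst hr
  have li := Aux19.li_of_kruskal hk
  have hrank := Aux19.rank_lower hd hA li
  have huniq := Aux19.unique_comp hd hA li
  have hwr : waringRank n d T = A.card := by
    apply le_antisymm
    · exact Nat.sInf_le ⟨A, rfl, hA.1⟩
    · show A.card ≤ sInf {r | ∃ A' : Finset (Proj n), A'.card = r ∧ Computes n d A' T}
      refine le_csInf ⟨A.card, ⟨A, rfl, hA.1⟩⟩ ?_
      rintro k ⟨B, rfl, hB⟩
      exact hrank B hB
  refine ⟨hwr, ?_⟩
  show ∃! A' : Finset (Proj n), A'.card = waringRank n d T ∧ Computes n d A' T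
  rw [hwr]
  refine ⟨A, ⟨rfl, hA.1⟩, ?_⟩
  rintro B ⟨hc, hB⟩
  exact huniq B hc hB
end
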